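/- arXiv:2011.10128 — 3 statements merged into one kernel-verified Lean document; each statement's English description precedes it below -/
import Mathlib

section
/- The birational R-matrix satisfies the braid relation: for three vectors a, b, c in (ℝ_{>0})^n, letting η_1 apply η to the first two components and η_2 to the last two, we have η_1 η_2 η_1 (a,b,c) = η_2 η_1 η_2 (a,b,c). -/
open Finset

noncomputable section BirationalR

/-- A vector of reals with cyclically indexed coordinates (upper index mod `n`). -/
abbrev Vec (n : ℕ) := ZMod n → ℝ

/-- `κ_r(a,b) = Σ_{j=r}^{r+n-1} (Π_{k=r+1}^{j} b_k)(Π_{k=j+1}^{r+n-1} a_k)`, indices mod `n`. -/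
def kappaF (n : ℕ) (r : ZMod n) (a b : Vec n) : ℝ :=
  ∑ d ∈ Finset.range n,
    (∏ t ∈ Finset.range d, b (r + 1 + (t : ℕ))) *
      ∏ t ∈ Finset.range (n - 1 - d), a (r + 1 + (d : ℕ) + (t : ℕ))

/-- First component `b'` of the birational R-matrix `η(a,b) = (b',a')`:
`b'_i = b_{i+1} κ_{i+1}(a,b)/κ_i(a,b)`. -/
def etaB (n : ℕ) (a b : Vec n) : Vec n :=
  fun i => b (i + 1) * kappaF n (i + 1) a b / kappaF n i a b

/-- Second component `a'` of `η(a,b) = (b',a')`: `a'_i = a_{i-1} κ_{i-1}(a,b)/κ_i(a,b)`. -/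
def etaA (n : ℕ) (a b : Vec n) : Vec n :=
  fun i => a (i - 1) * kappaF n (i - 1) a b / kappaF n i a b

/-- `η` applied to positions `(p, p+1)` of a tuple of vectors. -/
def etaAt (n : ℕ) (p : ℕ) (X : ℕ → Vec n) : ℕ → Vec n :=
  fun q => if q = p then etaB n (X p) (X (p + 1))
    else if q = p + 1 then etaA n (X p) (X (p + 1)) else X q

/-- Action of the word `s_{w₁} s_{w₂} ⋯ s_{wₗ}` (rightmost acts first). -/
def applyWord (n : ℕ) (w : List ℕ) (X : ℕ → Vec n) : ℕ → Vec n :=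
  w.foldr (etaAt n) X

/-- The tuple `(x_i, x_{i+1}, …, x_j)` as a list. -/
def seg {n : ℕ} (x : ℕ → Vec n) (i j : ℕ) : List (Vec n) :=
  (List.range (j + 1 - i)).map fun t => x (i + t)

/-- `τ_k^{(r)}(x_1,…,x_m)`: sum over weakly increasing `i_1 ≤ … ≤ i_k`, no index used
more than `n-1` times, of `x_{i_1}^{(r)} x_{i_2}^{(r-1)} ⋯ x_{i_k}^{(r-k+1)}`.
Encoded via multiplicity functions; `τ = 0` for negative `k`. -/
def tauF (n : ℕ) (r : ZMod n) (k : ℤ) (x : List (Vec n)) : ℝ :=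
  if 0 ≤ k then
    ∑ c ∈ (Fintype.piFinset fun _ : Fin x.length => Finset.range n).filter
        (fun c => ∑ i, c i = k.toNat),
      ∏ i : Fin x.length, ∏ β ∈ Finset.range (c i),
        x.get i (r - (∑ i' ∈ Finset.univ.filter (fun i' => i' < i), c i' : ℕ) - (β : ℕ))
  else 0

/-- `σ_k^{(r)}(x_1,…,x_m) = Σ_{t=0}^{k} x_1^{(r)} ⋯ x_1^{(r-t+1)} τ_{k-t}^{(r-t)}(x_2,…,x_m)`. -/
def sigmaF (n : ℕ) (r : ZMod n) (k : ℕ) : List (Vec n) → ℝ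
  | [] => if k = 0 then 1 else 0
  | y :: rest =>
      ∑ t ∈ Finset.range (k + 1),
        (∏ β ∈ Finset.range t, y (r - (β : ℕ))) * tauF n (r - (t : ℕ)) ((k : ℤ) - (t : ℤ)) rest

/-- `σ̄_k^{(r)}(x_1,…,x_m) = Σ_{t=0}^{k} τ_{k-t}^{(r)}(x_1,…,x_{m-1}) x_m^{(r-k+t)} ⋯ x_m^{(r-k+1)}`. -/
def sigmaBarF (n : ℕ) (r : ZMod n) (k : ℕ) : List (Vec n) → ℝ
  | [] => if k = 0 then 1 else 0
  | y :: rest =>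
      ∑ t ∈ Finset.range (k + 1),
        tauF n r ((k : ℤ) - (t : ℤ)) ((y :: rest).dropLast) *
          ∏ β ∈ Finset.range t,
            (y :: rest).getLast (List.cons_ne_nil y rest) (r - (k : ℕ) + 1 + (β : ℕ))

/-- `Ω_k^{(r)}(x_i,…,x_j) = Σ_{ℓ=0}^{n-1} σ^{(r)}_{(n-1)(k-i)+ℓ}(x_i,…,x_k)
σ̄^{(r+k-i-ℓ)}_{(n-1)(j-k)-ℓ}(x_{k+1},…,x_j)`. -/
def OmegaF (n : ℕ) (r : ZMod n) (k i j : ℕ) (x : ℕ → Vec n) : ℝ :=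
  ∑ ℓ ∈ Finset.range n,
    sigmaF n r ((n - 1) * (k - i) + ℓ) (seg x i k) *
      sigmaBarF n (r + (k : ℕ) - (i : ℕ) - (ℓ : ℕ)) ((n - 1) * (j - k) - ℓ) (seg x (k + 1) j)

/-- `P_k^{(r)}(x_i,…,x_j) = Σ_{t=0}^{k} (Π_{s=0}^{t-1} x_i^{(r-s)})
σ_{(n-1)(j-i-1)}^{(r-t)}(x_i,…,x_{j-1}) (Π_{s=0}^{k-t-1} x_j^{(r-t+j-i-1-s)})`. -/
def PF (n : ℕ) (r : ZMod n) (k i j : ℕ) (x : ℕ → Vec n) : ℝ :=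
  ∑ t ∈ Finset.range (k + 1),
    (∏ s ∈ Finset.range t, x i (r - (s : ℕ))) *
      sigmaF n (r - (t : ℕ)) ((n - 1) * (j - i - 1)) (seg x i (j - 1)) *
      ∏ s ∈ Finset.range (k - t), x j (r - (t : ℕ) + (j : ℕ) - (i : ℕ) - 1 - (s : ℕ))

end BirationalR

/-- `η` applied to the first two components of a triple. -/
noncomputable def eta1 (n : ℕ) (X : Vec n × Vec n × Vec n) : Vec n × Vec n × Vec n :=
  (etaB n X.1 X.2.1, etaA n X.1 X.2.1, X.2.2)

/-- `η` applied to the last two components of a triple. -/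
noncomputable def eta2 (n : ℕ) (X : Vec n × Vec n × Vec n) : Vec n × Vec n × Vec n :=
  (X.1, etaB n X.2.1 X.2.2, etaA n X.2.1 X.2.2)


section BraidAux
open Finset Filter

variable {n : ℕ} [NeZero n]

private lemma prod_range_zmod (g : ZMod n → ℝ) :
    ∏ t ∈ Finset.range n, g ((t : ℕ) : ZMod n) = ∏ j : ZMod n, g j := by
  refine Finset.prod_nbij' (fun t => ((t : ℕ) : ZMod n)) (fun z => z.val) ?_ ?_ ?_ ?_ ?_
  · intro a _; exact Finset.mem_univ _
  · intro z _; exact Finset.mem_range.mpr (ZMod.val_lt z)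
  · intro a ha; exact ZMod.val_cast_of_lt (Finset.mem_range.mp ha)
  · intro z _; exact ZMod.natCast_rightInverse z
  · intro a _; rfl

private lemma prod_range_shift (g : ZMod n → ℝ) (r : ZMod n) :
    ∏ t ∈ Finset.range n, g (r + (t:ℕ)) = ∏ j : ZMod n, g j := by
  rw [prod_range_zmod (fun j => g (r + j))]
  exact Equiv.prod_comp (Equiv.addLeft r) g

private lemma kappa_pos {a b : Vec n} (ha : ∀ i, 0 < a i) (hb : ∀ i, 0 < b i) (r : ZMod n) :
    0 < kappaF n r a b := by
  unfold kappaF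
  apply Finset.sum_pos
  · intro d _
    exact mul_pos (Finset.prod_pos fun t _ => hb _) (Finset.prod_pos fun t _ => ha _)
  · exact Finset.nonempty_range_iff.mpr (NeZero.ne n)

private lemma key_kappa (a b : Vec n) (r : ZMod n) :
    a r * kappaF n r a b
      = (∏ j, a j) - (∏ j, b j) + b (r+1) * kappaF n (r+1) a b := by
  have hn : 0 < n := Nat.pos_of_ne_zero (NeZero.ne n)
  obtain ⟨m, hm⟩ : ∃ m, n = m + 1 := ⟨n - 1, by omega⟩
  subst hm
  unfold kappaF
  rw [Finset.mul_sum, Finset.mul_sum, Finset.sum_range_succ', Finset.sum_range_succ]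
  have hmid : ∀ d ∈ Finset.range m,
      a r * ((∏ t ∈ Finset.range (d+1), b (r + 1 + (t : ℕ))) *
        ∏ t ∈ Finset.range (m + 1 - 1 - (d+1)), a (r + 1 + ((d+1 : ℕ) : ZMod (m+1)) + (t : ℕ)))
      = b (r+1) * ((∏ t ∈ Finset.range d, b (r + 1 + 1 + (t : ℕ))) *
        ∏ t ∈ Finset.range (m + 1 - 1 - d), a (r + 1 + 1 + ((d : ℕ) : ZMod (m+1)) + (t : ℕ))) := by
    intro d hd
    have hdm : d < m := Finset.mem_range.mp hd
    have e1 : ∏ t ∈ Finset.range (d+1), b (r + 1 + (t : ℕ))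
        = b (r+1) * ∏ t ∈ Finset.range d, b (r + 1 + 1 + (t : ℕ)) := by
      rw [Finset.prod_range_succ']
      rw [mul_comm]
      congr 1
      · congr 1; push_cast; ring
      · apply Finset.prod_congr rfl; intro t _; congr 1; push_cast; ring
    have e2 : ∏ t ∈ Finset.range (m + 1 - 1 - d), a (r + 1 + 1 + ((d : ℕ) : ZMod (m+1)) + (t : ℕ))
        = a r * ∏ t ∈ Finset.range (m + 1 - 1 - (d+1)), a (r + 1 + ((d+1 : ℕ) : ZMod (m+1)) + (t : ℕ)) := by
      have h1 : m + 1 - 1 - d = (m + 1 - 1 - (d+1)) + 1 := by omega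
      rw [h1, Finset.prod_range_succ]
      have h2 : ((m - (d+1) : ℕ) : ZMod (m+1)) = (m : ZMod (m+1)) - (d : ZMod (m+1)) - 1 := by
        have : (m - (d+1) : ℕ) = m - (d+1) := rfl
        rw [Nat.cast_sub (by omega)]
        push_cast; ring
      have h3 : r + 1 + 1 + ((d : ℕ) : ZMod (m+1)) + ((m + 1 - 1 - (d+1) : ℕ) : ZMod (m+1)) = r := by
        have hs : m + 1 - 1 - (d+1) = m - (d+1) := by omega
        rw [hs, h2]
        have : ((m : ℕ) : ZMod (m+1)) = ((m+1 : ℕ) : ZMod (m+1)) - 1 := by push_cast; ring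
        rw [this, ZMod.natCast_self]
        ring
      rw [h3, mul_comm]
      congr 1
      apply Finset.prod_congr rfl; intro t _; congr 1; push_cast; ring
    rw [e1, e2]; ring
  rw [Finset.sum_congr rfl hmid]
  have ext1 : a r * ((∏ t ∈ Finset.range 0, b (r + 1 + (t : ℕ))) *
      ∏ t ∈ Finset.range (m + 1 - 1 - 0), a (r + 1 + ((0 : ℕ) : ZMod (m+1)) + (t : ℕ)))
      = ∏ j, a j := by
    rw [← prod_range_shift a r, Finset.prod_range_succ']
    simp only [Finset.range_zero, Finset.prod_empty, one_mul, Nat.cast_zero]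
    rw [mul_comm]
    congr 1
    · apply Finset.prod_congr (by norm_num); intro t _; congr 1; push_cast; ring
    · congr 1; push_cast; ring
  have ext2 : b (r+1) * ((∏ t ∈ Finset.range m, b (r + 1 + 1 + (t : ℕ))) *
      ∏ t ∈ Finset.range (m + 1 - 1 - m), a (r + 1 + 1 + ((m : ℕ) : ZMod (m+1)) + (t : ℕ)))
      = ∏ j, b j := by
    have hz : m + 1 - 1 - m = 0 := by omega
    rw [hz]
    simp only [Finset.range_zero, Finset.prod_empty, mul_one]
    rw [← prod_range_shift b (r+1), Finset.prod_range_succ']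
    rw [mul_comm]
    congr 1
    · apply Finset.prod_congr (by norm_num); intro t _; congr 1; push_cast; ring
    · congr 1; push_cast; ring
  linarith [ext1, ext2]

variable {a b : Vec n}

private lemma etaB_pos (ha : ∀ i, 0 < a i) (hb : ∀ i, 0 < b i) (i : ZMod n) :
    0 < etaB n a b i :=
  div_pos (mul_pos (hb _) (kappa_pos ha hb _)) (kappa_pos ha hb _)

private lemma etaA_pos (ha : ∀ i, 0 < a i) (hb : ∀ i, 0 < b i) (i : ZMod n) :
    0 < etaA n a b i :=
  div_pos (mul_pos (ha _) (kappa_pos ha hb _)) (kappa_pos ha hb _)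

private lemma eta_pair_sum (ha : ∀ i, 0 < a i) (hb : ∀ i, 0 < b i) (i : ZMod n) :
    etaB n a b i + etaA n a b i = a i + b i := by
  have k1 := key_kappa a b i
  have k2 := key_kappa a b (i-1)
  rw [sub_add_cancel] at k2
  have hk := (kappa_pos ha hb i).ne'
  unfold etaB etaA
  field_simp
  linear_combination k2 - k1

private lemma eta_pair_mul (ha : ∀ i, 0 < a i) (hb : ∀ i, 0 < b i) (i : ZMod n) :
    etaB n a b i * etaA n a b (i+1) = a i * b (i+1) := by
  unfold etaB etaA
  rw [add_sub_cancel_right]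
  have h1 := (kappa_pos ha hb i).ne'
  have h2 := (kappa_pos ha hb (i+1)).ne'
  field_simp

private lemma eta_prodB (ha : ∀ i, 0 < a i) (hb : ∀ i, 0 < b i) :
    ∏ i, etaB n a b i = ∏ i, b i := by
  unfold etaB
  rw [Finset.prod_div_distrib, Finset.prod_mul_distrib]
  rw [Fintype.prod_equiv (Equiv.addRight (1 : ZMod n)) (fun x => b (x+1)) b (fun x => rfl),
      Fintype.prod_equiv (Equiv.addRight (1 : ZMod n)) (fun x => kappaF n (x+1) a b)
        (fun j => kappaF n j a b) (fun x => rfl)]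
  rw [mul_div_assoc, div_self, mul_one]
  exact Finset.prod_ne_zero_iff.mpr fun i _ => (kappa_pos ha hb i).ne'

private lemma eta_prodA (ha : ∀ i, 0 < a i) (hb : ∀ i, 0 < b i) :
    ∏ i, etaA n a b i = ∏ i, a i := by
  unfold etaA
  rw [Finset.prod_div_distrib, Finset.prod_mul_distrib]
  rw [Fintype.prod_equiv (Equiv.subRight (1 : ZMod n)) (fun x => a (x-1)) a (fun x => rfl),
      Fintype.prod_equiv (Equiv.subRight (1 : ZMod n)) (fun x => kappaF n (x-1) a b)
        (fun j => kappaF n j a b) (fun x => rfl)]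
  rw [mul_div_assoc, div_self, mul_one]
  exact Finset.prod_ne_zero_iff.mpr fun i _ => (kappa_pos ha hb i).ne'

private lemma sign_prop {r : ZMod n → ℝ} {q : ZMod n → ℝ} (hq : ∀ i, 0 < q i)
    (hrec : ∀ i, r (i+1) = r i * q i) {j : ZMod n} (hj : 0 < r j) : ∀ i, 0 < r i := by
  have key : ∀ k : ℕ, 0 < r (j + (k : ℕ)) := by
    intro k
    induction k with
    | zero => simpa using hj
    | succ k ih =>
        have : r (j + (k:ℕ) + 1) = r (j + (k:ℕ)) * q (j + (k:ℕ)) := hrec _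
        have h2 : 0 < r (j + (k:ℕ) + 1) := this ▸ mul_pos ih (hq _)
        have e : j + ((k+1 : ℕ) : ZMod n) = j + (k:ℕ) + 1 := by push_cast; ring
        rw [e]; exact h2
  intro i
  have e : i = j + ((i - j).val : ℕ) := by
    rw [ZMod.natCast_rightInverse (i - j)]; ring
  rw [e]; exact key _

private lemma prod_lt_prod_vec {x u : ZMod n → ℝ} (hx : ∀ i, 0 < x i) (hlt : ∀ i, x i < u i) :
    ∏ i, x i < ∏ i, u i := by
  apply Finset.prod_lt_prod_of_nonempty
  · intro i _; exact hx i
  · intro i _; exact hlt i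
  · exact Finset.univ_nonempty

private lemma pair_unique {y z v w : ZMod n → ℝ}
    (hy : ∀ i, 0 < y i) (hz : ∀ i, 0 < z i) (hv : ∀ i, 0 < v i) (hw : ∀ i, 0 < w i)
    (h1 : ∀ i, y i + z i = v i + w i) (h2 : ∀ i, y i * z (i+1) = v i * w (i+1))
    (hP : ∏ i, y i = ∏ i, v i) : y = v ∧ z = w := by
  set r : ZMod n → ℝ := fun i => v i - y i with hrdef
  have hr2 : ∀ i, r i = z i - w i := by intro i; have := h1 i; simp only [hrdef]; linarith
  have hrec : ∀ i, r (i+1) = r i * (w (i+1) / y i) := by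
    intro i
    have h := h2 i
    have hy' := (hy i).ne'
    field_simp
    simp only [hrdef]
    linear_combination h2 i - y i * h1 (i+1)
  have hall : (∀ i, r i = 0) ∨ (∀ i, 0 < r i) ∨ (∀ i, 0 < -r i) := by
    by_cases h0 : ∀ i, r i = 0
    · exact Or.inl h0
    · push_neg at h0
      obtain ⟨j, hj⟩ := h0
      rcases lt_or_gt_of_ne hj with hneg | hpos
      · refine Or.inr (Or.inr (sign_prop (q := fun i => w (i+1) / y i) ?_ ?_ (j := j) (by linarith)))
        · intro i; exact div_pos (hw _) (hy _)
        · intro i; rw [hrec i]; ring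
      · refine Or.inr (Or.inl (sign_prop (q := fun i => w (i+1) / y i) ?_ hrec hpos))
        intro i; exact div_pos (hw _) (hy _)
  rcases hall with h0 | hpos | hneg
  · constructor
    · funext i; have := h0 i; simp only [hrdef] at this; linarith
    · funext i; have := h0 i; rw [hr2 i] at this; linarith
  · exfalso
    have : ∏ i, y i < ∏ i, v i := by
      apply prod_lt_prod_vec hy
      intro i; have := hpos i; simp only [hrdef] at this; linarith
    linarith [this, hP.le]
  · exfalso
    have : ∏ i, v i < ∏ i, y i := by
      apply prod_lt_prod_vec hv
      intro i; have := hneg i; simp only [hrdef] at this; linarith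
    linarith [this, hP.ge]

private lemma alg1 (A0 A1 A2 B0 c1 c2 f1 f2 g2 : ℝ) (hB0 : B0 ≠ 0) (hc1 : c1 ≠ 0) (hc2 : c2 ≠ 0)
    (hf1 : f1 ≠ 0) (hf2 : f2 ≠ 0)
    (hr : c1 * (c2 * A2) = c1 * (A1 * (f2 + g2)) - f1 * g2 * A0) :
    f2 * (A2 / (B0 * (f1/c1) * (f2/c2)) - A1 / (B0 * (f1/c1)))
      = g2 * (A1 / (B0 * (f1/c1)) - A0 / B0) := by
  field_simp
  linear_combination hr

private lemma alg2 (A B P Q : ℝ) (hB : B ≠ 0) (hP : P ≠ 0) (hQ : Q ≠ 0) :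
    A / (B * (P / Q)) = A / B * (Q / P) := by
  field_simp
  try ring

private lemma band_unique {x u y z v w : ZMod n → ℝ}
    (hx : ∀ i, 0 < x i) (hu : ∀ i, 0 < u i) (hy : ∀ i, 0 < y i) (hz : ∀ i, 0 < z i)
    (hv : ∀ i, 0 < v i) (hw : ∀ i, 0 < w i)
    (O1 : ∀ i, x i + (y i + z i) = u i + (v i + w i))
    (O2 : ∀ i, x i * (y (i+1) + z (i+1)) + y i * z (i+1)
             = u i * (v (i+1) + w (i+1)) + v i * w (i+1))
    (O3 : ∀ i, x i * (y (i+1) * z (i+2)) = u i * (v (i+1) * w (i+2)))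
    (hPx : ∏ i, x i = ∏ i, u i) (hPy : ∏ i, y i = ∏ i, v i)
    (hne : ∏ i, y i ≠ ∏ i, u i) :
    x = u ∧ y = v ∧ z = w := by
  have hnpos : 0 < n := Nat.pos_of_ne_zero (NeZero.ne n)
  set d : ZMod n → ℝ := fun i => u i - x i with hddef
  have hrec0 : ∀ i : ZMod n, u (i-1) * (u i * d (i+1))
      = u (i-1) * (d i * (y (i+1) + z (i+1))) - (y i * z (i+1)) * d (i-1) := by
    intro i
    have e1 := O2 i
    have e2 := O1 (i+1)
    have e3 := O3 (i-1)
    rw [sub_add_cancel] at e3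
    have e4 : i - 1 + 2 = i + 1 := by ring
    rw [e4] at e3
    simp only [hddef]
    linear_combination u (i-1) * e1 - u (i-1) * u i * e2 - e3
  by_cases hd0 : ∀ i, d i = 0
  · have hxu : x = u := by funext i; have := hd0 i; simp only [hddef] at this; linarith
    have hyz1 : ∀ i, y i + z i = v i + w i := by
      intro i; have := O1 i; rw [hxu] at this; linarith
    have hyz2 : ∀ i, y i * z (i+1) = v i * w (i+1) := by
      intro i
      have h3 := O3 (i-1)
      rw [sub_add_cancel] at h3
      have e4 : i - 1 + 2 = i + 1 := by ring
      rw [e4, hxu] at h3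
      exact mul_left_cancel₀ (hu (i-1)).ne' h3
    obtain ⟨h1, h2⟩ := pair_unique hy hz hv hw hyz1 hyz2 hPy
    exact ⟨hxu, h1, h2⟩
  · exfalso
    push_neg at hd0
    obtain ⟨j0, hj0⟩ := hd0
    -- ℕ-indexed sequences
    set D : ℕ → ℝ := fun k => d (j0 + (k : ℕ)) with hD
    set U : ℕ → ℝ := fun k => u (j0 + (k : ℕ)) with hU
    set Yf : ℕ → ℝ := fun k => y (j0 + (k : ℕ)) with hYf
    set Zf : ℕ → ℝ := fun k => z (j0 + (k : ℕ)) with hZf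
    have hUpos : ∀ k, 0 < U k := fun k => hu _
    have hYfpos : ∀ k, 0 < Yf k := fun k => hy _
    have hZfpos : ∀ k, 0 < Zf k := fun k => hz _
    set Y : ℕ → ℝ := fun k => (∏ t ∈ Finset.range k, Yf (t+1)) / (∏ t ∈ Finset.range k, U t)
      with hY
    have hYpos : ∀ k, 0 < Y k :=
      fun k => div_pos (Finset.prod_pos fun t _ => hYfpos _) (Finset.prod_pos fun t _ => hUpos _)
    have hYstep : ∀ k, Y (k+1) = Y k * (Yf (k+1) / U k) := by
      intro k
      simp only [hY, Finset.prod_range_succ]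
      field_simp
      try ring
    have hDper : ∀ k, D (k + n) = D k := by
      intro k; simp only [hD]; congr 1; push_cast [ZMod.natCast_self]; ring
    have hYper : ∀ k, Y (k + n) = Y k * ((∏ i, y i) / (∏ i, u i)) := by
      intro k
      simp only [hY, Finset.prod_range_add]
      have e1 : ∏ t ∈ Finset.range n, Yf (k + t + 1) = ∏ i, y i := by
        rw [← prod_range_shift y (j0 + ((k+1 : ℕ) : ZMod n))]
        apply Finset.prod_congr rfl; intro t _; simp only [hYf]; congr 1; push_cast; ring
      have e2 : ∏ t ∈ Finset.range n, U (k + t) = ∏ i, u i := by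
        rw [← prod_range_shift u (j0 + ((k : ℕ) : ZMod n))]
        apply Finset.prod_congr rfl; intro t _; simp only [hU]; congr 1; push_cast; ring
      rw [e1, e2]
      field_simp
      try ring
    set h : ℕ → ℝ := fun k => D k / Y k with hh
    have hDh : ∀ k, D k = h k * Y k := by
      intro k; rw [hh]; exact (div_mul_cancel₀ _ (hYpos k).ne').symm
    have claim1 : ∀ k, Yf (k+2) * (h (k+2) - h (k+1)) = Zf (k+2) * (h (k+1) - h k) := by
      intro k
      have hr := hrec0 (j0 + ((k+1 : ℕ) : ZMod n))
      have i1 : j0 + ((k+1 : ℕ) : ZMod n) - 1 = j0 + ((k:ℕ) : ZMod n) := by push_cast; ring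
      have i2 : j0 + ((k+1 : ℕ) : ZMod n) + 1 = j0 + ((k+2:ℕ) : ZMod n) := by push_cast; ring
      rw [i1, i2] at hr
      have hr' : U k * (U (k+1) * D (k+2))
          = U k * (D (k+1) * (Yf (k+2) + Zf (k+2))) - (Yf (k+1) * Zf (k+2)) * D k := hr
      have hk2 : Y (k+2) = Y (k+1) * (Yf (k+2) / U (k+1)) := hYstep (k+1)
      have hk1 : Y (k+1) = Y k * (Yf (k+1) / U k) := hYstep k
      simp only [hh]
      rw [hk2, hk1]
      exact alg1 (D k) (D (k+1)) (D (k+2)) (Y k) (U k) (U (k+1)) (Yf (k+1)) (Yf (k+2))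
        (Zf (k+2)) (hYpos k).ne' (hUpos k).ne' (hUpos (k+1)).ne' (hYfpos (k+1)).ne'
        (hYfpos (k+2)).ne' hr'
    -- periodicity of h
    have hPyne : (0:ℝ) < ∏ i, y i := Finset.prod_pos fun i _ => hy i
    have hPune : (0:ℝ) < ∏ i, u i := Finset.prod_pos fun i _ => hu i
    have claim2 : ∀ k, h (k + n) = h k * ((∏ i, u i) / (∏ i, y i)) := by
      intro k
      simp only [hh]
      rw [hDper, hYper]
      exact alg2 (D k) (Y k) _ _ (hYpos k).ne' hPyne.ne' hPune.ne'
    -- representation of increments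
    have hrep : ∀ k, ∃ c : ℝ, 0 < c ∧ h (k+1) - h k = c * (h 1 - h 0) := by
      intro k
      induction k with
      | zero => exact ⟨1, one_pos, by ring⟩
      | succ k ih =>
          obtain ⟨c, hc, hce⟩ := ih
          refine ⟨Zf (k+2) / Yf (k+2) * c,
            mul_pos (div_pos (hZfpos _) (hYfpos _)) hc, ?_⟩
          have hf : Yf (k+2) ≠ 0 := (hYfpos (k+2)).ne'
          have e : h (k+2) - h (k+1) = Zf (k+2) / Yf (k+2) * (h (k+1) - h k) := by
            rw [div_mul_eq_mul_div, eq_div_iff hf]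
            linear_combination claim1 k
          rw [e, hce]; ring
    by_cases hΔ : h 1 - h 0 = 0
    · -- h constant
      have hδ : ∀ k, h (k+1) - h k = 0 := by
        intro k; obtain ⟨c, _, hce⟩ := hrep k; rw [hce, hΔ, mul_zero]
      have hconst : ∀ k, h k = h 0 := by
        intro k
        induction k with
        | zero => rfl
        | succ k ih => have := hδ k; linarith
      have hY0 : Y 0 = 1 := by simp [hY]
      have hh0 : h 0 = D 0 := by simp only [hh, hY0]; rw [div_one]
      have hD0 : D 0 ≠ 0 := by
        simp only [hD]; push_cast; rw [add_zero]; exact hj0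
      have := claim2 0
      rw [Nat.zero_add] at this
      rw [hconst n, hh0] at this
      have h1 : D 0 * 1 = D 0 * ((∏ i, u i)/(∏ i, y i)) := by rw [mul_one]; exact this
      have h2 := mul_left_cancel₀ hD0 h1
      rw [eq_comm, div_eq_one_iff_eq hPyne.ne'] at h2
      exact hne h2.symm
    · -- increments all same sign
      set lam : ℝ := (∏ i, u i) / (∏ i, y i) with hlam
      have hsum : ∀ k, h k * (lam - 1) = ∑ j ∈ Finset.range n, (h (k + j + 1) - h (k + j)) := by
        intro k
        have htel : ∑ j ∈ Finset.range n, (h (k + j + 1) - h (k + j)) = h (k + n) - h k := by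
          have := Finset.sum_range_sub (fun j => h (k + j)) n
          simpa [add_assoc] using this
        rw [htel, claim2 k]
        ring
      choose cf hcf hce using hrep
      have hsum2 : ∀ k, h k * (lam - 1) = (∑ j ∈ Finset.range n, cf (k + j)) * (h 1 - h 0) := by
        intro k
        rw [hsum k, Finset.sum_mul]
        apply Finset.sum_congr rfl
        intro j _
        exact hce (k + j)
      have hCpos : ∀ k, 0 < ∑ j ∈ Finset.range n, cf (k + j) :=
        fun k => Finset.sum_pos (fun j _ => hcf _) (Finset.nonempty_range_iff.mpr (NeZero.ne n))
      have hΔ2 : 0 < (h 1 - h 0)^2 := by positivity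
      have hlam1 : lam ≠ 1 := by
        intro hl
        have h0 := hsum2 0
        rw [hl] at h0
        simp only [sub_self, mul_zero] at h0
        exact (mul_ne_zero (hCpos 0).ne' hΔ) h0.symm
      have hl2 : 0 < (lam - 1)^2 := by
        have hne1 := sub_ne_zero.mpr hlam1
        positivity
      have hhsign : ∀ k k', 0 < h k * h k' := by
        intro k k'
        have e1 := hsum2 k
        have e2 := hsum2 k'
        have key : (h k * h k') * (lam - 1)^2
            = ((∑ j ∈ Finset.range n, cf (k + j)) * (∑ j ∈ Finset.range n, cf (k' + j)))
              * (h 1 - h 0)^2 := by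
          linear_combination (h k * (lam - 1)) * e2
            + ((∑ j ∈ Finset.range n, cf (k' + j)) * (h 1 - h 0)) * e1
        nlinarith [key, hl2, mul_pos (mul_pos (hCpos k) (hCpos k')) hΔ2]
      -- all d same sign
      have hdsign : ∀ i i' : ZMod n, 0 < d i * d i' := by
        intro i i'
        have ei : i = j0 + ((i - j0).val : ℕ) := by
          rw [ZMod.natCast_rightInverse (i - j0)]; ring
        have ei' : i' = j0 + ((i' - j0).val : ℕ) := by
          rw [ZMod.natCast_rightInverse (i' - j0)]; ring
        have hdi : d i = h ((i - j0).val) * Y ((i - j0).val) := by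
          conv_lhs => rw [ei]
          exact hDh _
        have hdi' : d i' = h ((i' - j0).val) * Y ((i' - j0).val) := by
          conv_lhs => rw [ei']
          exact hDh _
        rw [hdi, hdi']
        have := hhsign ((i - j0).val) ((i' - j0).val)
        have hY1 := hYpos ((i - j0).val)
        have hY2 := hYpos ((i' - j0).val)
        nlinarith [mul_pos (mul_pos this hY1) hY2]
      have hd00 : d 0 ≠ 0 := by
        intro h0
        have := hdsign 0 0
        rw [h0] at this; simp at this
      rcases lt_or_gt_of_ne hd00 with hneg | hpos
      · -- all d < 0 : u < x everywhere
        have hall : ∀ i, d i < 0 := by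
          intro i
          have := hdsign 0 i
          rcases (mul_pos_iff.mp this) with ⟨h1, _⟩ | ⟨_, h2⟩
          · linarith
          · exact h2
        have : ∏ i, u i < ∏ i, x i := by
          apply prod_lt_prod_vec hu
          intro i; have := hall i; simp only [hddef] at this; linarith
        rw [hPx] at this; exact lt_irrefl _ this
      · have hall : ∀ i, 0 < d i := by
          intro i
          have := hdsign 0 i
          rcases (mul_pos_iff.mp this) with ⟨_, h2⟩ | ⟨h1, _⟩
          · exact h2
          · linarith
        have : ∏ i, x i < ∏ i, u i := by
          apply prod_lt_prod_vec hx
          intro i; have := hall i; simp only [hddef] at this; linarith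
        rw [hPx] at this; exact lt_irrefl _ this

private lemma braid_generic {a b c : Vec n} (ha : ∀ i, 0 < a i) (hb : ∀ i, 0 < b i)
    (hc : ∀ i, 0 < c i) (hbc : ∏ i, b i ≠ ∏ i, c i) :
    eta1 n (eta2 n (eta1 n (a, b, c))) = eta2 n (eta1 n (eta2 n (a, b, c))) := by
  -- LHS chain
  set b1 := etaB n a b with hb1d
  set a1 := etaA n a b with ha1d
  set c1 := etaB n a1 c with hc1d
  set a2 := etaA n a1 c with ha2d
  set c2 := etaB n b1 c1 with hc2d
  set b2 := etaA n b1 c1 with hb2d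
  -- RHS chain
  set c3 := etaB n b c with hc3d
  set b3 := etaA n b c with hb3d
  set c4 := etaB n a c3 with hc4d
  set a3 := etaA n a c3 with ha3d
  set b4 := etaB n a3 b3 with hb4d
  set a4 := etaA n a3 b3 with ha4d
  -- positivity
  have hb1 : ∀ i, 0 < b1 i := etaB_pos ha hb
  have ha1 : ∀ i, 0 < a1 i := etaA_pos ha hb
  have hc1 : ∀ i, 0 < c1 i := etaB_pos ha1 hc
  have ha2 : ∀ i, 0 < a2 i := etaA_pos ha1 hc
  have hc2 : ∀ i, 0 < c2 i := etaB_pos hb1 hc1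
  have hb2 : ∀ i, 0 < b2 i := etaA_pos hb1 hc1
  have hc3 : ∀ i, 0 < c3 i := etaB_pos hb hc
  have hb3 : ∀ i, 0 < b3 i := etaA_pos hb hc
  have hc4 : ∀ i, 0 < c4 i := etaB_pos ha hc3
  have ha3 : ∀ i, 0 < a3 i := etaA_pos ha hc3
  have hb4 : ∀ i, 0 < b4 i := etaB_pos ha3 hb3
  have ha4 : ∀ i, 0 < a4 i := etaA_pos ha3 hb3
  -- pair relations
  have E1 : ∀ i, c2 i * b2 (i+1) = b1 i * c1 (i+1) := eta_pair_mul hb1 hc1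
  have E2 : ∀ i, c2 i + b2 i = b1 i + c1 i := eta_pair_sum hb1 hc1
  have E3 : ∀ i, c1 i + a2 i = a1 i + c i := eta_pair_sum ha1 hc
  have E4 : ∀ i, c1 i * a2 (i+1) = a1 i * c (i+1) := eta_pair_mul ha1 hc
  have E5 : ∀ i, b1 i * a1 (i+1) = a i * b (i+1) := eta_pair_mul ha hb
  have E6 : ∀ i, b1 i + a1 i = a i + b i := eta_pair_sum ha hb
  have F1 : ∀ i, b4 i + a4 i = a3 i + b3 i := eta_pair_sum ha3 hb3
  have F2 : ∀ i, b4 i * a4 (i+1) = a3 i * b3 (i+1) := eta_pair_mul ha3 hb3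
  have F3 : ∀ i, c4 i + a3 i = a i + c3 i := eta_pair_sum ha hc3
  have F4 : ∀ i, c4 i * a3 (i+1) = a i * c3 (i+1) := eta_pair_mul ha hc3
  have F5 : ∀ i, c3 i + b3 i = b i + c i := eta_pair_sum hb hc
  have F6 : ∀ i, c3 i * b3 (i+1) = b i * c (i+1) := eta_pair_mul hb hc
  -- S-data
  have O1 : ∀ i : ZMod n, c2 i + (b2 i + a2 i) = c4 i + (b4 i + a4 i) := by
    intro i
    linear_combination E2 i + E3 i + E6 i - F1 i - F3 i - F5 i
  have O2 : ∀ i : ZMod n, c2 i * (b2 (i+1) + a2 (i+1)) + b2 i * a2 (i+1)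
      = c4 i * (b4 (i+1) + a4 (i+1)) + b4 i * a4 (i+1) := by
    intro i
    linear_combination E1 i + a2 (i+1) * E2 i + b1 i * E3 (i+1) + E4 i + E5 i + c (i+1) * E6 i
      - (c4 i * F1 (i+1) + F2 i + F4 i + b3 (i+1) * F3 i + a i * F5 (i+1) + F6 i)
  have O3 : ∀ i : ZMod n, c2 i * (b2 (i+1) * a2 (i+2)) = c4 i * (b4 (i+1) * a4 (i+2)) := by
    intro i
    have eidx : i + 1 + 1 = i + 2 := by ring
    have E4b := E4 (i+1); rw [eidx] at E4b
    have F2b := F2 (i+1); rw [eidx] at F2b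
    have F6b := F6 (i+1); rw [eidx] at F6b
    linear_combination a2 (i+2) * E1 i + b1 i * E4b + c (i+2) * E5 i
      - (c4 i * F2b + b3 (i+2) * F4 i + a i * F6b)
  -- products
  have Pc2 : ∏ i, c2 i = ∏ i, c i := by
    rw [hc2d, eta_prodB hb1 hc1, hc1d, eta_prodB ha1 hc]
  have Pb2 : ∏ i, b2 i = ∏ i, b i := by
    rw [hb2d, eta_prodA hb1 hc1, hb1d, eta_prodB ha hb]
  have Pa2 : ∏ i, a2 i = ∏ i, a i := by
    rw [ha2d, eta_prodA ha1 hc, ha1d, eta_prodA ha hb]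
  have Pc4 : ∏ i, c4 i = ∏ i, c i := by
    rw [hc4d, eta_prodB ha hc3, hc3d, eta_prodB hb hc]
  have Pb4 : ∏ i, b4 i = ∏ i, b i := by
    rw [hb4d, eta_prodB ha3 hb3, hb3d, eta_prodA hb hc]
  have Pa4 : ∏ i, a4 i = ∏ i, a i := by
    rw [ha4d, eta_prodA ha3 hb3, ha3d, eta_prodA ha hc3]
  have hPx : ∏ i, c2 i = ∏ i, c4 i := by rw [Pc2, Pc4]
  have hPy : ∏ i, b2 i = ∏ i, b4 i := by rw [Pb2, Pb4]
  have hne : ∏ i, b2 i ≠ ∏ i, c4 i := by rw [Pb2, Pc4]; exact hbc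
  obtain ⟨h1, h2, h3⟩ := band_unique hc2 hc4 hb2 ha2 hb4 ha4 O1 O2 O3 hPx hPy hne
  -- conclude
  show (c2, b2, a2) = (c4, b4, a4)
  rw [h1, h2, h3]

private lemma contAt_kappa {X Y : ℝ → Vec n} {t0 : ℝ}
    (hX : ∀ i, ContinuousAt (fun t => X t i) t0) (hY : ∀ i, ContinuousAt (fun t => Y t i) t0)
    (r : ZMod n) : ContinuousAt (fun t => kappaF n r (X t) (Y t)) t0 := by
  unfold kappaF
  apply tendsto_finset_sum
  intro d _
  apply Filter.Tendsto.mul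
  · apply tendsto_finset_prod
    intro t _
    exact hY _
  · apply tendsto_finset_prod
    intro t _
    exact hX _

lemma contAt_etaB {X Y : ℝ → Vec n} {t0 : ℝ}
    (hX : ∀ i, ContinuousAt (fun t => X t i) t0) (hY : ∀ i, ContinuousAt (fun t => Y t i) t0)
    (hX0 : ∀ i, 0 < X t0 i) (hY0 : ∀ i, 0 < Y t0 i) (i : ZMod n) :
    ContinuousAt (fun t => etaB n (X t) (Y t) i) t0 := by
  unfold etaB
  exact ((hY _).mul (contAt_kappa hX hY _)).div (contAt_kappa hX hY _)
    (kappa_pos hX0 hY0 i).ne'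

lemma contAt_etaA {X Y : ℝ → Vec n} {t0 : ℝ}
    (hX : ∀ i, ContinuousAt (fun t => X t i) t0) (hY : ∀ i, ContinuousAt (fun t => Y t i) t0)
    (hX0 : ∀ i, 0 < X t0 i) (hY0 : ∀ i, 0 < Y t0 i) (i : ZMod n) :
    ContinuousAt (fun t => etaA n (X t) (Y t) i) t0 := by
  unfold etaA
  exact ((hX _).mul (contAt_kappa hX hY _)).div (contAt_kappa hX hY _)
    (kappa_pos hX0 hY0 i).ne'

private lemma eq_at_of_eq_pos {f g : ℝ → ℝ} (hf : ContinuousAt f 0) (hg : ContinuousAt g 0)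
    (h : ∀ t > (0:ℝ), f t = g t) : f 0 = g 0 := by
  have h1 : Filter.Tendsto f (nhdsWithin 0 (Set.Ioi 0)) (nhds (f 0)) :=
    hf.tendsto.mono_left nhdsWithin_le_nhds
  have h2 : Filter.Tendsto g (nhdsWithin 0 (Set.Ioi 0)) (nhds (g 0)) :=
    hg.tendsto.mono_left nhdsWithin_le_nhds
  have h3 : Filter.Tendsto f (nhdsWithin 0 (Set.Ioi 0)) (nhds (g 0)) := by
    apply h2.congr'
    filter_upwards [self_mem_nhdsWithin] with t ht
    exact (h t ht).symm
  exact tendsto_nhds_unique h1 h3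

end BraidAux

/-- the birational R-matrix satisfies the braid relation
`η₁ η₂ η₁ (a,b,c) = η₂ η₁ η₂ (a,b,c)`. -/
theorem eta_braid (n : ℕ) (hn : 1 ≤ n) (a b c : Vec n)
    (ha : ∀ i, 0 < a i) (hb : ∀ i, 0 < b i) (hc : ∀ i, 0 < c i) :
    eta1 n (eta2 n (eta1 n (a, b, c))) = eta2 n (eta1 n (eta2 n (a, b, c))) := by
  haveI : NeZero n := ⟨by omega⟩
  by_cases hbc : ∏ i, b i = ∏ i, c i
  · -- degenerate case: perturb c
    set C : ℝ → Vec n := fun t => fun i => (1 + t) * c i with hCdef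
    have hC0 : C 0 = c := by funext i; simp [hCdef]
    have hC0pos : ∀ i, 0 < C 0 i := by rw [hC0]; exact hc
    have hCc : ∀ i, ContinuousAt (fun t => C t i) 0 := by
      intro i; simp only [hCdef]; fun_prop
    have hCpos : ∀ t > (0:ℝ), ∀ i, 0 < C t i := fun t ht i => mul_pos (by linarith) (hc i)
    have hprodC : ∀ t > (0:ℝ), ∏ i, b i ≠ ∏ i, C t i := by
      intro t ht
      have hPC : ∏ i, C t i = (1+t)^n * ∏ i, c i := by
        simp only [hCdef]
        rw [Finset.prod_mul_distrib, Finset.prod_const]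
        congr 2
        simp [Finset.card_univ, ZMod.card]
      rw [hPC, hbc]
      have h1 : 1 < (1+t:ℝ)^n := one_lt_pow₀ (by linarith) (by omega)
      have h2 : 0 < ∏ i, c i := Finset.prod_pos fun i _ => hc i
      nlinarith
    set b1 : Vec n := etaB n a b with hb1
    set a1 : Vec n := etaA n a b with ha1
    have hb1p : ∀ i, 0 < b1 i := etaB_pos ha hb
    have ha1p : ∀ i, 0 < a1 i := etaA_pos ha hb
    set c1 : ℝ → Vec n := fun t => etaB n a1 (C t) with hc1
    set a2 : ℝ → Vec n := fun t => etaA n a1 (C t) with ha2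
    set l1 : ℝ → Vec n := fun t => etaB n b1 (c1 t) with hl1
    set l2 : ℝ → Vec n := fun t => etaA n b1 (c1 t) with hl2
    set c3 : ℝ → Vec n := fun t => etaB n b (C t) with hc3
    set b3 : ℝ → Vec n := fun t => etaA n b (C t) with hb3
    set c4 : ℝ → Vec n := fun t => etaB n a (c3 t) with hc4
    set a3 : ℝ → Vec n := fun t => etaA n a (c3 t) with ha3
    set r2 : ℝ → Vec n := fun t => etaB n (a3 t) (b3 t) with hr2
    set r3 : ℝ → Vec n := fun t => etaA n (a3 t) (b3 t) with hr3
    have hLs : ∀ t, eta1 n (eta2 n (eta1 n (a, b, C t))) = (l1 t, l2 t, a2 t) := fun t => rfl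
    have hRs : ∀ t, eta2 n (eta1 n (eta2 n (a, b, C t))) = (c4 t, r2 t, r3 t) := fun t => rfl
    -- positivity at 0
    have hc10 : ∀ i, 0 < c1 0 i := etaB_pos ha1p hC0pos
    have hc30 : ∀ i, 0 < c3 0 i := etaB_pos hb hC0pos
    have hb30 : ∀ i, 0 < b3 0 i := etaA_pos hb hC0pos
    have hc40 : ∀ i, 0 < c4 0 i := etaB_pos ha hc30
    have ha30 : ∀ i, 0 < a3 0 i := etaA_pos ha hc30
    -- continuity at 0
    have hc1c : ∀ i, ContinuousAt (fun t => c1 t i) 0 :=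
      contAt_etaB (fun _ => continuousAt_const) hCc ha1p hC0pos
    have ha2c : ∀ i, ContinuousAt (fun t => a2 t i) 0 :=
      contAt_etaA (fun _ => continuousAt_const) hCc ha1p hC0pos
    have hl1c : ∀ i, ContinuousAt (fun t => l1 t i) 0 :=
      contAt_etaB (fun _ => continuousAt_const) hc1c hb1p hc10
    have hl2c : ∀ i, ContinuousAt (fun t => l2 t i) 0 :=
      contAt_etaA (fun _ => continuousAt_const) hc1c hb1p hc10
    have hc3c : ∀ i, ContinuousAt (fun t => c3 t i) 0 :=
      contAt_etaB (fun _ => continuousAt_const) hCc hb hC0pos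
    have hb3c : ∀ i, ContinuousAt (fun t => b3 t i) 0 :=
      contAt_etaA (fun _ => continuousAt_const) hCc hb hC0pos
    have hc4c : ∀ i, ContinuousAt (fun t => c4 t i) 0 :=
      contAt_etaB (fun _ => continuousAt_const) hc3c ha hc30
    have ha3c : ∀ i, ContinuousAt (fun t => a3 t i) 0 :=
      contAt_etaA (fun _ => continuousAt_const) hc3c ha hc30
    have hr2c : ∀ i, ContinuousAt (fun t => r2 t i) 0 :=
      contAt_etaB ha3c hb3c ha30 hb30
    have hr3c : ∀ i, ContinuousAt (fun t => r3 t i) 0 :=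
      contAt_etaA ha3c hb3c ha30 hb30
    have heqpos : ∀ t > (0:ℝ), (l1 t, l2 t, a2 t) = (c4 t, r2 t, r3 t) := by
      intro t ht
      rw [← hLs t, ← hRs t]
      exact braid_generic ha hb (hCpos t ht) (hprodC t ht)
    have e1 : ∀ i, l1 0 i = c4 0 i := fun i =>
      eq_at_of_eq_pos (hl1c i) (hc4c i)
        (fun t ht => congrFun (congrArg Prod.fst (heqpos t ht)) i)
    have e2 : ∀ i, l2 0 i = r2 0 i := fun i =>
      eq_at_of_eq_pos (hl2c i) (hr2c i)
        (fun t ht => congrFun (congrArg (fun p => p.2.1) (heqpos t ht)) i)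
    have e3 : ∀ i, a2 0 i = r3 0 i := fun i =>
      eq_at_of_eq_pos (ha2c i) (hr3c i)
        (fun t ht => congrFun (congrArg (fun p => p.2.2) (heqpos t ht)) i)
    have final : (l1 0, l2 0, a2 0) = (c4 0, r2 0, r3 0) := by
      rw [Prod.ext_iff, Prod.ext_iff]
      exact ⟨funext e1, funext e2, funext e3⟩
    calc eta1 n (eta2 n (eta1 n (a, b, c)))
        = (l1 0, l2 0, a2 0) := by rw [← hC0]; exact hLs 0
      _ = (c4 0, r2 0, r3 0) := final
      _ = eta2 n (eta1 n (eta2 n (a, b, c))) := by rw [← hC0]; exact (hRs 0).symm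
  · exact braid_generic ha hb hc hbc
end

section
/- Branching identity for σ̄: for vectors x_i, ..., x_j (j > i), σ̄_{(n-1)(j-i)}^{(r)}(x_i, ..., x_j) = Σ_{k=0}^{n-1} (Π_{t=0}^{k-1} x_i^{(r-t)}) σ̄_{(n-1)(j-i-1)}^{(r-k)}(x_{i+1}, ..., x_j) (Π_{s=0}^{n-k-2} x_j^{(r-k+j-i-1-s)}), with all upper indices taken modulo n. -/
open Finset

lemma seg_ne_nil {n : ℕ} (x : ℕ → Vec n) {i j : ℕ} (h : i ≤ j) : seg x i j ≠ [] := by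
  simp [seg, List.range_eq_nil]; omega

lemma seg_eq_concat {n : ℕ} (x : ℕ → Vec n) {i j : ℕ} (h : i < j) :
    seg x i j = seg x i (j-1) ++ [x j] := by
  have h1 : j + 1 - i = (j - i) + 1 := by omega
  have h2 : (j-1) + 1 - i = j - i := by omega
  rw [seg, h1, List.range_succ, List.map_append, seg, h2]
  simp only [List.map_cons, List.map_nil]
  rw [show i + (j - i) = j by omega]

lemma seg_dropLast {n : ℕ} (x : ℕ → Vec n) {i j : ℕ} (h : i ≤ j) (h1 : 1 ≤ j) :
    (seg x i j).dropLast = seg x i (j-1) := by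
  rcases eq_or_lt_of_le h with rfl | h'
  · have : i + 1 - i = 1 := by omega
    have h2 : (i-1) + 1 - i = 0 := by omega
    simp [seg, this, h2, show List.range 1 = [0] from rfl]
  · rw [seg_eq_concat x h', List.dropLast_concat]

lemma seg_getLast {n : ℕ} (x : ℕ → Vec n) {i j : ℕ} (h : i ≤ j) (hne : seg x i j ≠ []) :
    (seg x i j).getLast hne = x j := by
  rcases eq_or_lt_of_le h with rfl | h'
  · have : i + 1 - i = 1 := by omega
    simp [seg, this, show List.range 1 = [0] from rfl]
  · have := seg_eq_concat x h'
    rw [List.getLast_congr _ _ this, List.getLast_concat]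
    simp

lemma seg_cons {n : ℕ} (x : ℕ → Vec n) {i j : ℕ} (h : i ≤ j) :
    seg x i j = x i :: seg x (i+1) j := by
  have h1 : j + 1 - i = (j - i) + 1 := by omega
  have h2 : j + 1 - (i + 1) = j - i := by omega
  rw [seg, h1, List.range_succ_eq_map, List.map_cons, seg, h2, List.map_map]
  congr 1
  · simp
    intro a _
    exact congrArg x (by omega)

lemma tau_neg {n : ℕ} {r : ZMod n} {k : ℤ} (hk : k < 0) (x : List (Vec n)) :
    tauF n r k x = 0 := by
  simp [tauF, not_le.2 hk]

lemma tau_gt {n : ℕ} {r : ZMod n} {k : ℤ} (hn : 1 ≤ n) (x : List (Vec n))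
    (hk : ((n:ℤ) - 1) * x.length < k) : tauF n r k x = 0 := by
  rw [tauF]
  split
  · rename_i h0
    have hempty : ((Fintype.piFinset fun _ : Fin x.length => Finset.range n).filter
        (fun c => ∑ i, c i = k.toNat)) = ∅ := by
      rw [Finset.filter_eq_empty_iff]
      intro c hc
      rw [Fintype.mem_piFinset] at hc
      intro hsum
      have hle : ∑ i, c i ≤ ∑ _i : Fin x.length, (n - 1) := by
        apply Finset.sum_le_sum
        intro i _
        have := hc i
        rw [Finset.mem_range] at this
        omega
      rw [Finset.sum_const, Finset.card_univ, Fintype.card_fin, smul_eq_mul] at hle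
      have hk' : (k.toNat : ℤ) = k := Int.toNat_of_nonneg h0
      have : (x.length * (n - 1) : ℕ) < k.toNat := by
        have h2 : ((x.length * (n-1) : ℕ) : ℤ) < k := by
          push_cast [Nat.cast_sub hn]
          linarith [hk]
        omega
      omega
    rw [hempty, Finset.sum_empty]
  · rfl

lemma tau_cons (n : ℕ) (r : ZMod n) (M : ℤ) (y : Vec n) (rest : List (Vec n)) :
    tauF n r M (y :: rest) =
      ∑ k ∈ Finset.range n, (∏ β ∈ Finset.range k, y (r - (β:ℕ))) *
        tauF n (r - (k:ℕ)) (M - (k:ℕ)) rest := by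
  rcases lt_or_ge M 0 with hM | hM
  · rw [tau_neg hM]
    symm
    apply Finset.sum_eq_zero
    intro k _
    rw [tau_neg (by have : (0:ℤ) ≤ (k:ℕ) := Int.natCast_nonneg k; omega), mul_zero]
  set m := rest.length with hm
  set N := M.toNat with hN
  -- the summand of tauF on y :: rest
  set G : (Fin (m+1) → ℕ) → ℝ := fun c =>
    ∏ i : Fin (m+1), ∏ β ∈ Finset.range (c i),
      (y :: rest).get i (r - (∑ i' ∈ Finset.univ.filter (fun i' => i' < i), c i' : ℕ) - (β : ℕ))
    with hG
  have key : ∑ c ∈ (Fintype.piFinset fun _ : Fin (m+1) => Finset.range n).filter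
        (fun c => ∑ i, c i = N), G c
      = ∑ k ∈ Finset.range n,
          ∑ c' ∈ (Fintype.piFinset fun _ : Fin m => Finset.range n).filter
            (fun c' => k + ∑ i, c' i = N), G (Fin.cons k c') := by
    conv_rhs => rw [Finset.sum_sigma']
    apply Finset.sum_nbij' (i := fun c => (⟨c 0, Fin.tail c⟩ : Σ _k : ℕ, Fin m → ℕ))
      (j := fun p => Fin.cons p.1 p.2)
    · intro c hc
      rw [Finset.mem_filter, Fintype.mem_piFinset] at hc
      rw [Finset.mem_sigma, Finset.mem_filter, Fintype.mem_piFinset]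
      refine ⟨hc.1 0, fun i => hc.1 i.succ, ?_⟩
      have := hc.2
      rw [Fin.sum_univ_succ] at this
      simpa [Fin.tail] using this
    · intro p hp
      rw [Finset.mem_sigma, Finset.mem_filter, Fintype.mem_piFinset] at hp
      rw [Finset.mem_filter, Fintype.mem_piFinset]
      constructor
      · intro i
        refine Fin.cases ?_ ?_ i
        · simpa using hp.1
        · intro i'; simpa using hp.2.1 i'
      · rw [Fin.sum_univ_succ]
        simpa using hp.2.2
    · intro c _; exact Fin.cons_self_tail c
    · intro p _; ext : 1 <;> simp [Fin.tail]
    · intro c _; rw [Fin.cons_self_tail]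
  rw [show tauF n r M (y :: rest) = ∑ c ∈ (Fintype.piFinset fun _ : Fin (m+1) =>
      Finset.range n).filter (fun c => ∑ i, c i = N), G c from by
    rw [tauF, if_pos hM]; rfl]
  rw [key]
  apply Finset.sum_congr rfl
  intro k hk
  -- evaluate G (Fin.cons k c')
  have hGcons : ∀ c' : Fin m → ℕ, G (Fin.cons k c') =
      (∏ β ∈ Finset.range k, y (r - (β:ℕ))) *
        ∏ i : Fin m, ∏ β ∈ Finset.range (c' i),
          rest.get i ((r - (k:ℕ)) - (∑ i' ∈ Finset.univ.filter (fun i' => i' < i), c' i' : ℕ) - (β : ℕ)) := by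
    intro c'
    simp only [hG]
    rw [Fin.prod_univ_succ]
    have hpart : ∀ i : Fin m,
        (∑ i' ∈ Finset.univ.filter (fun i' => i' < i.succ), (Fin.cons k c' : Fin (m+1) → ℕ) i')
          = k + ∑ i' ∈ Finset.univ.filter (fun i' => i' < i), c' i' := by
      intro i
      rw [Finset.sum_filter, Finset.sum_filter, Fin.sum_univ_succ]
      simp [Fin.succ_lt_succ_iff, Fin.succ_pos]
    congr 1
    · simp only [Fin.cons_zero]
      apply Finset.prod_congr rfl
      intro β _
      have h0 : (Finset.univ.filter (fun i' => i' < (0 : Fin (m+1)))) = ∅ := by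
        ext i'; simp
      rw [h0]
      simp
      rfl
    · apply Finset.prod_congr rfl
      intro i _
      rw [Fin.cons_succ, hpart i]
      apply Finset.prod_congr rfl
      intro β _
      have : (y :: rest).get i.succ = rest.get i := by simp
      rw [this]
      congr 1
      push_cast
      ring
  rcases le_or_gt k N with hkN | hkN
  · have hfil : (Fintype.piFinset fun _ : Fin m => Finset.range n).filter
        (fun c' => k + ∑ i, c' i = N) = (Fintype.piFinset fun _ : Fin m => Finset.range n).filter
        (fun c' => ∑ i, c' i = N - k) := by
      apply Finset.filter_congr
      intro c' _
      constructor <;> intro h <;> omega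
    rw [hfil]
    have htau : tauF n (r - (k:ℕ)) (M - (k:ℕ)) rest =
        ∑ c' ∈ (Fintype.piFinset fun _ : Fin m => Finset.range n).filter
            (fun c' => ∑ i, c' i = N - k),
          ∏ i : Fin m, ∏ β ∈ Finset.range (c' i),
            rest.get i ((r - (k:ℕ)) - (∑ i' ∈ Finset.univ.filter (fun i' => i' < i), c' i' : ℕ) - (β : ℕ)) := by
      rw [tauF, if_pos (by omega)]
      have : (M - (k:ℕ)).toNat = N - k := by omega
      rw [this]
    rw [htau, Finset.mul_sum]
    apply Finset.sum_congr rfl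
    intro c' _
    exact hGcons c'
  · have hfil : (Fintype.piFinset fun _ : Fin m => Finset.range n).filter
        (fun c' => k + ∑ i, c' i = N) = ∅ := by
      rw [Finset.filter_eq_empty_iff]
      intro c' _
      omega
    rw [hfil, Finset.sum_empty]
    rw [tau_neg (by have : ((k:ℤ)) = (k:ℕ) := rfl; omega), mul_zero]

lemma sigmaBar_ne_nil (n : ℕ) (r : ZMod n) (k : ℕ) (l : List (Vec n)) (h : l ≠ []) :
    sigmaBarF n r k l = ∑ t ∈ Finset.range (k + 1),
      tauF n r ((k : ℤ) - (t : ℤ)) l.dropLast *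
        ∏ β ∈ Finset.range t, l.getLast h (r - (k : ℕ) + 1 + (β : ℕ)) := by
  cases l with
  | nil => exact absurd rfl h
  | cons y rest => rfl


/-- branching identity for `σ̄`. -/
theorem sigmaBar_branching (n : ℕ) (hn : 2 ≤ n) (x : ℕ → Vec n)
    (hx : ∀ p r, 0 < x p r) (i j : ℕ) (hij : i < j) (r : ZMod n) :
    sigmaBarF n r ((n - 1) * (j - i)) (seg x i j) =
      ∑ k ∈ Finset.range n,
        (∏ t ∈ Finset.range k, x i (r - (t : ℕ))) *
          sigmaBarF n (r - (k : ℕ)) ((n - 1) * (j - i - 1)) (seg x (i + 1) j) *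
          ∏ s ∈ Finset.range (n - k - 1),
            x j (r - (k : ℕ) + (j : ℕ) - (i : ℕ) - 1 - (s : ℕ)) := by
  have hn1 : 1 ≤ n := by omega
  have hij' : i ≤ j := hij.le
  have h1j : 1 ≤ j := by omega
  have hi1j : i + 1 ≤ j := hij
  have hn0 : ((n : ZMod n)) = 0 := ZMod.natCast_self n
  have hKK : (n-1)*(j-i) = (n-1)*(j-i-1) + (n-1) := by
    obtain ⟨d, hd⟩ : ∃ d, j - i = d + 1 := ⟨j-i-1, by omega⟩
    rw [hd]
    simp [Nat.mul_succ]
  have hmlen : (seg x (i+1) (j-1)).length = j - i - 1 := by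
    simp [seg]; omega
  have e1 : (((n-1)*(j-i) : ℕ) : ZMod n) = (i : ZMod n) - (j : ZMod n) := by
    push_cast [Nat.cast_sub hn1, Nat.cast_sub hij']
    rw [hn0]; ring
  have e2 : (((n-1)*(j-i-1) : ℕ) : ZMod n) = (i : ZMod n) + 1 - (j : ZMod n) := by
    push_cast [Nat.cast_sub hn1, Nat.cast_sub (show 1 ≤ j - i by omega),
      Nat.cast_sub hij']
    rw [hn0]; ring
  -- expand LHS
  rw [sigmaBar_ne_nil n r _ _ (seg_ne_nil x hij'), seg_dropLast x hij' h1j,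
    seg_getLast x hij' (seg_ne_nil x hij'), seg_cons x (show i ≤ j - 1 by omega)]
  simp only [tau_cons]
  simp only [Finset.sum_mul]
  rw [Finset.sum_comm]

  apply Finset.sum_congr rfl
  intro k hk
  have hkn : k < n := Finset.mem_range.mp hk
  -- expand RHS summand
  rw [sigmaBar_ne_nil n _ _ _ (seg_ne_nil x hi1j), seg_dropLast x hi1j h1j,
    seg_getLast x hi1j (seg_ne_nil x hi1j)]
  rw [Finset.mul_sum, Finset.sum_mul]
  -- restrict the t-sum
  have hsub : Finset.Ico (n-1-k) ((n-1)*(j-i-1)+1+(n-1-k)) ⊆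
      Finset.range ((n-1)*(j-i)+1) := by
    intro t ht
    rw [Finset.mem_Ico] at ht
    rw [Finset.mem_range]
    omega
  rw [← Finset.sum_subset hsub ?hvan]
  case hvan =>
    intro t ht hnot
    rw [Finset.mem_range] at ht
    rw [Finset.mem_Ico, not_and_or] at hnot
    have hz : tauF n (r - (k:ℕ)) ((((n-1)*(j-i) : ℕ) : ℤ) - (t:ℤ) - ((k:ℕ):ℤ))
        (seg x (i+1) (j-1)) = 0 := by
      rcases hnot with h' | h'
      · push_neg at h'
        apply tau_gt hn1
        rw [hmlen]
        have hc : ((n:ℤ)-1) * ((j-i-1:ℕ):ℤ) = (((n-1)*(j-i-1) : ℕ) : ℤ) := by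
          push_cast [Nat.cast_sub hn1]; ring
        rw [hc]
        omega
      · push_neg at h'
        apply tau_neg
        omega
    rw [hz, mul_zero, zero_mul]
  rw [Finset.sum_Ico_eq_sum_range,
    show (n-1)*(j-i-1)+1+(n-1-k) - (n-1-k) = (n-1)*(j-i-1)+1 from by omega]
  apply Finset.sum_congr rfl
  intro s hs
  have hsK : s < (n-1)*(j-i-1)+1 := Finset.mem_range.mp hs
  -- match tau arguments
  have harg : (((n-1)*(j-i) : ℕ) : ℤ) - ((n-1-k+s : ℕ):ℤ) - ((k:ℕ):ℤ)
      = (((n-1)*(j-i-1) : ℕ) : ℤ) - ((s:ℕ):ℤ) := by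
    omega
  rw [harg]
  rw [Finset.prod_range_add]
  have hR : (∏ β ∈ Finset.range (n-1-k), x j (r - ((((n-1)*(j-i) : ℕ)) : ZMod n) + 1 + (β:ℕ)))
      = ∏ s' ∈ Finset.range (n-k-1), x j (r - (k:ℕ) + (j:ℕ) - (i:ℕ) - 1 - (s':ℕ)) := by
    rw [show n-k-1 = n-1-k from by omega]
    rw [← Finset.prod_range_reflect]
    apply Finset.prod_congr rfl
    intro β hβ
    have hβ' : β < n-1-k := Finset.mem_range.mp hβ
    apply congrArg
    have e4 : ((n-1-k-1-β : ℕ) : ZMod n) = -2 - (k:ZMod n) - (β:ZMod n) := by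
      push_cast [Nat.cast_sub (show 1 ≤ n by omega), Nat.cast_sub (show k ≤ n-1 by omega),
        Nat.cast_sub (show 1 ≤ n-1-k by omega), Nat.cast_sub (show β ≤ n-1-k-1 by omega)]
      rw [hn0]; ring
    rw [e1, e4]
    ring
  have hQ : (∏ β ∈ Finset.range s, x j (r - ((((n-1)*(j-i) : ℕ)) : ZMod n) + 1 + ((n-1-k) + β : ℕ)))
      = ∏ β ∈ Finset.range s, x j (r - (k:ℕ) - ((((n-1)*(j-i-1) : ℕ)) : ZMod n) + 1 + (β:ℕ)) := by
    apply Finset.prod_congr rfl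
    intro β _
    apply congrArg
    have e3 : ((n-1-k : ℕ) : ZMod n) = -1 - (k:ZMod n) := by
      push_cast [Nat.cast_sub hn1, Nat.cast_sub (show k ≤ n-1 by omega)]
      rw [hn0]; ring
    rw [e1, e2]
    push_cast [e3]
    ring
  rw [hR, hQ]
  ring
end

section
/- For 1 ≤ i < j ≤ m, κ_r(x_i, s_{i+1}⋯s_{j-1}(x_{i+1})) = σ̄^{(r-1)}_{(n-1)(j-i)}(x_i, ..., x_j) / σ̄^{(r)}_{(n-1)(j-i-1)}(x_{i+1}, ..., x_j), where s_{i+1}⋯s_{j-1} acts via the birational R-matrix and upper indices are taken mod n. -/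
open Finset

section Aux
open Finset
variable {n : ℕ}

lemma tauF_neg (r : ZMod n) (k : ℤ) (hk : k < 0) (x : List (Vec n)) : tauF n r k x = 0 := by
  simp [tauF, not_le.mpr hk]

lemma tauF_zero (hn : 1 ≤ n) (r : ZMod n) (x : List (Vec n)) : tauF n r 0 x = 1 := by
  rw [tauF, if_pos le_rfl]
  have h : (Fintype.piFinset fun _ : Fin x.length => Finset.range n).filter
      (fun c => ∑ i, c i = (0:ℤ).toNat) = {fun _ => 0} := by
    ext c
    simp only [Finset.mem_filter, Fintype.mem_piFinset, Finset.mem_range,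
      Finset.mem_singleton, Int.toNat_zero, Finset.sum_eq_zero_iff, Finset.mem_univ]
    constructor
    · rintro ⟨-, h2⟩
      funext i; exact h2 i trivial
    · rintro rfl
      exact ⟨fun _ => hn, fun _ _ => rfl⟩
  rw [h, Finset.sum_singleton]
  simp

lemma tauF_nonneg (r : ZMod n) (k : ℤ) (x : List (Vec n))
    (hx : ∀ v ∈ x, ∀ s, 0 ≤ v s) : 0 ≤ tauF n r k x := by
  rw [tauF]
  split
  · apply Finset.sum_nonneg
    intro c _
    apply Finset.prod_nonneg
    intro i _
    apply Finset.prod_nonneg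
    intro β _
    exact hx _ (x.get_mem i) _
  · exact le_rfl

lemma tauF_vanish (r : ZMod n) (k : ℤ) (x : List (Vec n))
    (hk : (((n - 1) * x.length : ℕ) : ℤ) < k) : tauF n r k x = 0 := by
  rw [tauF]
  split
  · next h0 =>
    convert Finset.sum_empty
    rw [Finset.filter_eq_empty_iff]
    intro c hc
    intro hsum
    have hle : ∑ i, c i ≤ (n - 1) * x.length := by
      calc ∑ i, c i ≤ ∑ _i : Fin x.length, (n - 1) := by
            apply Finset.sum_le_sum
            intro i _
            have := Finset.mem_range.mp ((Fintype.mem_piFinset.mp hc) i)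
            omega
        _ = (n - 1) * x.length := by
            rw [Finset.sum_const, Finset.card_univ, Fintype.card_fin, smul_eq_mul, Nat.mul_comm]
    rw [hsum] at hle
    omega
  · rfl

end Aux

section Aux2
open Finset
variable {n : ℕ}

lemma cum_succ {L : ℕ} (c : Fin (L + 1) → ℕ) (i : Fin L) :
    (∑ i' ∈ Finset.univ.filter (fun i' => i' < i.succ), c i') =
      c 0 + ∑ i' ∈ Finset.univ.filter (fun i' => i' < i), Fin.tail c i' := by
  rw [Finset.sum_filter, Finset.sum_filter, Fin.sum_univ_succ]
  congr 1
  · apply Finset.sum_congr rfl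
    intro i' _
    exact if_congr (Fin.succ_lt_succ_iff) rfl rfl

lemma weight_cons (r : ZMod n) (y : Vec n) (x : List (Vec n)) (c : Fin (x.length + 1) → ℕ) :
    (∏ i : Fin (x.length + 1), ∏ β ∈ Finset.range (c i),
       (y :: x).get i (r - (∑ i' ∈ Finset.univ.filter (fun i' => i' < i), c i' : ℕ) - (β : ℕ)))
    = (∏ β ∈ Finset.range (c 0), y (r - (β:ℕ))) *
      ∏ i : Fin x.length, ∏ β ∈ Finset.range (Fin.tail c i),
        x.get i ((r - (c 0 : ℕ)) - (∑ i' ∈ Finset.univ.filter (fun i' => i' < i), Fin.tail c i' : ℕ) - (β : ℕ)) := by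
  rw [Fin.prod_univ_succ]
  congr 1
  · apply Finset.prod_congr rfl
    intro β _
    have h0 : (Finset.univ.filter (fun i' => i' < (0 : Fin (x.length + 1)))) = ∅ := by
      apply Finset.filter_false_of_mem
      intro i' _
      exact Fin.not_lt_zero i'
    rw [h0]
    norm_num
    rfl
  · apply Finset.prod_congr rfl
    intro i _
    apply Finset.prod_congr rfl
    intro β _
    rw [cum_succ]
    have hg : ∀ s, (y :: x).get i.succ s = x.get i s := fun _ => rfl
    rw [hg]
    push_cast
    ring_nf

lemma tauF_cons (r : ZMod n) (k : ℕ) (y : Vec n) (x : List (Vec n)) :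
    tauF n r (k:ℤ) (y :: x) =
      ∑ a ∈ Finset.range n, (∏ β ∈ Finset.range a, y (r - (β:ℕ))) *
        tauF n (r - (a:ℕ)) ((k:ℤ) - (a:ℤ)) x := by
  have hstep : ∀ a : ℕ, tauF n (r - (a:ℕ)) ((k:ℤ) - (a:ℤ)) x
      = ∑ c ∈ (Fintype.piFinset fun _ : Fin x.length => Finset.range n).filter
          (fun c => a + ∑ i, c i = k),
          ∏ i, ∏ β ∈ Finset.range (c i),
            x.get i ((r - (a:ℕ)) - (∑ i' ∈ Finset.univ.filter (fun i' => i' < i), c i' : ℕ) - (β : ℕ)) := by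
    intro a
    by_cases hak : a ≤ k
    · rw [tauF, if_pos (by omega)]
      apply Finset.sum_congr
      · apply Finset.filter_congr
        intro c _
        omega
      · intros; rfl
    · rw [tauF_neg _ _ (by omega)]
      rw [Finset.filter_eq_empty_iff.mpr (fun c _ => by omega), Finset.sum_empty]
  have hL : tauF n r (k:ℤ) (y :: x) =
      ∑ c ∈ (Fintype.piFinset fun _ : Fin (x.length + 1) => Finset.range n).filter
          (fun c => ∑ i, c i = k),
        ∏ i : Fin (x.length + 1), ∏ β ∈ Finset.range (c i),
          (y :: x).get i (r - (∑ i' ∈ Finset.univ.filter (fun i' => i' < i), c i' : ℕ) - (β : ℕ)) := by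
    rw [tauF, if_pos (by positivity), Int.toNat_natCast]
    rfl
  rw [hL]
  simp only [hstep]
  simp only [Finset.mul_sum]
  rw [Finset.sum_sigma']
  apply Finset.sum_bij' (i := fun (c : Fin (x.length + 1) → ℕ) _ =>
      (⟨c 0, Fin.tail c⟩ : Σ _a : ℕ, (Fin x.length → ℕ)))
    (j := fun p _ => (Fin.cons p.1 p.2 : Fin (x.length + 1) → ℕ))
  · intro c hc
    simp only [Finset.mem_filter, Fintype.mem_piFinset] at hc
    rw [Finset.mem_sigma]
    constructor
    · exact hc.1 0
    · simp only [Finset.mem_filter, Fintype.mem_piFinset]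
      refine ⟨fun i => hc.1 i.succ, ?_⟩
      have := hc.2
      rw [Fin.sum_univ_succ] at this
      exact this
  · intro p hp
    rw [Finset.mem_sigma] at hp
    obtain ⟨hp1, hp2⟩ := hp
    simp only [Finset.mem_filter, Fintype.mem_piFinset] at hp2 ⊢
    constructor
    · intro i
      induction i using Fin.cases with
      | zero => simpa using hp1
      | succ i' => simpa using hp2.1 i'
    · rw [Fin.sum_univ_succ]
      simpa using hp2.2
  · intro c _
    exact Fin.cons_self_tail c
  · intro p _
    simp
  · intro c hc
    exact weight_cons r y x c

end Aux2



section Aux3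
open Finset
variable {n : ℕ}

lemma sigmaBarF_cons_eq (r : ZMod n) (k : ℕ) (y : Vec n) (rest : List (Vec n)) :
    sigmaBarF n r k (y :: rest) =
      ∑ t ∈ Finset.range (k + 1),
        tauF n r ((k : ℤ) - (t : ℤ)) ((y :: rest).dropLast) *
          ∏ β ∈ Finset.range t,
            (y :: rest).getLast (List.cons_ne_nil y rest) (r - (k : ℕ) + 1 + (β : ℕ)) := rfl

lemma sigmaBarF_peel (hn : 1 ≤ n) (r : ZMod n) (k : ℕ) (hk : n - 1 ≤ k)
    (y z : Vec n) (rest : List (Vec n)) :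
    sigmaBarF n r k (y :: z :: rest) =
      ∑ c ∈ Finset.range n, (∏ β ∈ Finset.range c, y (r - (β:ℕ))) *
        sigmaBarF n (r - (c:ℕ)) (k - c) (z :: rest) := by
  rw [sigmaBarF_cons_eq]
  have hdrop : (y :: z :: rest).dropLast = y :: (z :: rest).dropLast := rfl
  have hlast : ∀ s, (y :: z :: rest).getLast (List.cons_ne_nil _ _) s
      = (z :: rest).getLast (List.cons_ne_nil _ _) s := by
    intro s
    rw [List.getLast_cons]
  have h1 : ∀ t ∈ Finset.range (k+1),
      tauF n r ((k : ℤ) - (t : ℤ)) ((y :: z :: rest).dropLast) *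
        ∏ β ∈ Finset.range t, (y :: z :: rest).getLast (List.cons_ne_nil _ _) (r - (k : ℕ) + 1 + (β : ℕ))
      = ∑ c ∈ Finset.range n, (∏ β ∈ Finset.range c, y (r - (β:ℕ))) *
          (tauF n (r - (c:ℕ)) ((k : ℤ) - (t : ℤ) - (c:ℤ)) ((z :: rest).dropLast) *
           ∏ β ∈ Finset.range t, (z :: rest).getLast (List.cons_ne_nil _ _) (r - (k : ℕ) + 1 + (β : ℕ))) := by
    intro t ht
    rw [Finset.mem_range] at ht
    have htk : t ≤ k := by omega
    have hcast : (k : ℤ) - (t : ℤ) = ((k - t : ℕ) : ℤ) := by push_cast; omega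
    rw [hdrop, hcast, tauF_cons, Finset.sum_mul]
    apply Finset.sum_congr rfl
    intro c _
    have hc2 : ((k - t : ℕ) : ℤ) - (c : ℤ) = (k : ℤ) - (t : ℤ) - (c : ℤ) := by push_cast; omega
    rw [hc2]
    rw [Finset.prod_congr rfl (fun β _ => hlast (r - (k : ℕ) + 1 + (β : ℕ)))]
    ring
  rw [Finset.sum_congr rfl h1, Finset.sum_comm]
  apply Finset.sum_congr rfl
  intro c hc
  rw [Finset.mem_range] at hc
  have hck : c ≤ k := by omega
  rw [← Finset.mul_sum]
  congr 1
  rw [sigmaBarF_cons_eq]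
  have hsub : Finset.range (k - c + 1) ⊆ Finset.range (k + 1) := by
    apply Finset.range_subset_range.mpr; omega
  rw [← Finset.sum_subset hsub]
  · apply Finset.sum_congr rfl
    intro t ht
    rw [Finset.mem_range] at ht
    congr 1
    · congr 1
      push_cast
      omega
    · apply Finset.prod_congr rfl
      intro β _
      congr 2
      rw [Nat.cast_sub hck]
      ring
  · intro t ht hnt
    rw [Finset.mem_range] at ht hnt
    rw [tauF_neg]
    · ring
    · push_cast; omega

lemma sigmaBarF_succ_deg (r : ZMod n) (k : ℕ) (y : Vec n) (rest : List (Vec n))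
    (hk : (n - 1) * rest.length ≤ k) :
    sigmaBarF n r (k + 1) (y :: rest) =
      (y :: rest).getLast (List.cons_ne_nil y rest) (r - (k:ℕ)) * sigmaBarF n r k (y :: rest) := by
  rw [sigmaBarF_cons_eq, sigmaBarF_cons_eq, Finset.sum_range_succ']
  have hlen : (y :: rest).dropLast.length = rest.length := by
    rw [List.length_dropLast, List.length_cons]
    omega
  have h0 : tauF n r ((k:ℤ) + 1 - (0:ℤ)) ((y :: rest).dropLast) = 0 := by
    apply tauF_vanish
    rw [hlen]
    push_cast
    omega
  push_cast at h0 ⊢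
  rw [h0, zero_mul, add_zero, Finset.mul_sum]
  apply Finset.sum_congr rfl
  intro t ht
  rw [Finset.prod_range_succ']
  push_cast
  ring_nf

end Aux3


section Aux4
open Finset
variable {n : ℕ}

lemma sigmaBarF_add_deg (r : ZMod n) (k : ℕ) (y : Vec n) (rest : List (Vec n))
    (hk : (n - 1) * rest.length ≤ k) (e : ℕ) :
    sigmaBarF n r (k + e) (y :: rest) =
      sigmaBarF n r k (y :: rest) *
        ∏ u ∈ Finset.range e, (y :: rest).getLast (List.cons_ne_nil y rest) (r - ((k + u : ℕ))) := by
  induction e with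
  | zero => simp
  | succ e ih =>
    have h2 : k + (e + 1) = (k + e) + 1 := by omega
    rw [h2, sigmaBarF_succ_deg r (k+e) y rest (by omega), ih, Finset.prod_range_succ]
    push_cast
    ring

lemma sigmaBarF_pos (hn : 1 ≤ n) (r : ZMod n) (k : ℕ) (y : Vec n) (rest : List (Vec n))
    (hpos : ∀ v ∈ y :: rest, ∀ s, 0 < v s) : 0 < sigmaBarF n r k (y :: rest) := by
  rw [sigmaBarF_cons_eq]
  apply Finset.sum_pos'
  · intro t _
    apply mul_nonneg
    · apply tauF_nonneg
      intro v hv s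
      exact le_of_lt (hpos v (List.dropLast_subset _ hv) s)
    · apply Finset.prod_nonneg
      intro β _
      exact le_of_lt (hpos _ (List.getLast_mem _) _)
  · refine ⟨k, Finset.mem_range.mpr (by omega), ?_⟩
    have h0 : ((k:ℤ) - (k:ℤ)) = 0 := by ring
    rw [h0, tauF_zero hn, one_mul]
    apply Finset.prod_pos
    intro β _
    exact hpos _ (List.getLast_mem _) _

lemma seg_cons_s7 (X : ℕ → Vec n) (a b : ℕ) (hab : a ≤ b) :
    seg X a b = X a :: seg X (a + 1) b := by
  unfold seg
  have h1 : b + 1 - a = (b + 1 - (a + 1)) + 1 := by omega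
  rw [h1, List.range_succ_eq_map, List.map_cons, List.map_map]
  congr 1
  apply List.map_congr_left
  intro t _
  show X (a + (t + 1)) = X (a + 1 + t)
  exact congrArg X (by omega)

lemma seg_self (X : ℕ → Vec n) (a : ℕ) : seg X a a = [X a] := by
  unfold seg
  have h1 : a + 1 - a = 1 := by omega
  rw [h1]
  rfl

lemma seg_nil (X : ℕ → Vec n) (a b : ℕ) (h : b < a) : seg X a b = [] := by
  unfold seg
  have h1 : b + 1 - a = 0 := by omega
  rw [h1]
  rfl

lemma seg_length (X : ℕ → Vec n) (a b : ℕ) : (seg X a b).length = b + 1 - a := by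
  unfold seg
  simp

lemma seg_ne_nil_s7 (X : ℕ → Vec n) (a b : ℕ) (hab : a ≤ b) : seg X a b ≠ [] := by
  rw [seg_cons_s7 X a b hab]
  exact List.cons_ne_nil _ _

lemma seg_snoc (X : ℕ → Vec n) (a b : ℕ) (hab : a < b) :
    seg X a b = seg X a (b - 1) ++ [X b] := by
  unfold seg
  have h1 : b + 1 - a = (b - a) + 1 := by omega
  have h2 : b - 1 + 1 - a = b - a := by omega
  rw [h1, h2, List.range_succ, List.map_append]
  congr 1
  show [X (a + (b - a))] = [X b]
  rw [congrArg X (show a + (b - a) = b by omega)]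

lemma seg_getLast_s7 (X : ℕ → Vec n) (a b : ℕ) (hab : a ≤ b) (h : seg X a b ≠ []) :
    (seg X a b).getLast h = X b := by
  rcases eq_or_lt_of_le hab with heq | hlt
  · subst heq
    rw [List.getLast_congr _ (by simp) (seg_self X a)]
    rfl
  · rw [List.getLast_congr _ (by simp) (seg_snoc X a b hlt)]
    exact List.getLast_append_singleton _

end Aux4


section Aux5
open Finset
variable {n : ℕ}

noncomputable def passL (n : ℕ) : List (Vec n) → Vec n → Vec n
  | [], v => v
  | y :: rest, v => etaB n y (passL n rest v)

lemma applyWord_untouched (w : List ℕ) (X : ℕ → Vec n) (q : ℕ) (hq : ∀ p ∈ w, q < p) :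
    applyWord n w X q = X q := by
  induction w with
  | nil => rfl
  | cons p w ih =>
    show etaAt n p (applyWord n w X) q = X q
    unfold etaAt
    have h1 : q ≠ p := by have := hq p (by simp); omega
    have h2 : q ≠ p + 1 := by have := hq p (by simp); omega
    rw [if_neg h1, if_neg h2]
    exact ih (fun p' hp' => hq p' (by simp [hp']))

lemma applyWord_range' (X : ℕ → Vec n) (l : ℕ) : ∀ p, 1 ≤ p →
    applyWord n (List.range' p l) X p = passL n (seg X p (p + l - 1)) (X (p + l)) := by
  induction l with
  | zero =>
    intro p hp
    have h1 : seg X p (p + 0 - 1) = [] := seg_nil X p (p - 1) (by omega)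
    rw [h1]
    rfl
  | succ l ih =>
    intro p hp
    rw [List.range'_succ]
    show etaAt n p (applyWord n (List.range' (p+1) l) X) p = _
    unfold etaAt
    rw [if_pos rfl]
    have hA : applyWord n (List.range' (p+1) l) X p = X p := by
      apply applyWord_untouched
      intro q hq
      rw [List.mem_range'_1] at hq
      omega
    have hB : applyWord n (List.range' (p+1) l) X (p + 1)
        = passL n (seg X (p+1) (p + 1 + l - 1)) (X (p + 1 + l)) := ih (p+1) (by omega)
    rw [hA, hB]
    have h2 : seg X p (p + (l+1) - 1) = X p :: seg X (p+1) (p + 1 + l - 1) := by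
      have h3 : p + (l + 1) - 1 = p + l := by omega
      have h4 : p + 1 + l - 1 = p + l := by omega
      rw [h3, h4]
      exact seg_cons_s7 X p (p + l) (by omega)
    rw [h2]
    show etaB n (X p) (passL n (seg X (p+1) (p+1+l-1)) (X (p+1+l))) = _
    have h5 : p + (l+1) = p + 1 + l := by omega
    rw [h5]
    rfl

lemma prod_ratio (g : ℕ → ℝ) (hg : ∀ t, g t ≠ 0) (e : ℕ) :
    ∏ t ∈ Finset.range e, g (t+1) / g t = g e / g 0 := by
  induction e with
  | zero => simp [div_self (hg 0)]
  | succ e ih =>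
    rw [Finset.prod_range_succ, ih, div_mul_div_comm, mul_comm (g e) (g (e+1)),
      mul_div_mul_right _ _ (hg e)]

lemma seg_entry_pos (X : ℕ → Vec n) (hX : ∀ p r, 0 < X p r) (a b : ℕ) :
    ∀ v ∈ seg X a b, ∀ s, 0 < v s := by
  intro v hv s
  unfold seg at hv
  rw [List.mem_map] at hv
  obtain ⟨t, -, rfl⟩ := hv
  exact hX _ _

lemma sigmaBarF_seg_pos (hn : 1 ≤ n) (X : ℕ → Vec n) (hX : ∀ p r, 0 < X p r)
    (t : ZMod n) (k a b : ℕ) (hab : a ≤ b) : 0 < sigmaBarF n t k (seg X a b) := by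
  rw [seg_cons_s7 X a b hab]
  apply sigmaBarF_pos hn
  intro v hv s
  rw [← seg_cons_s7 X a b hab] at hv
  exact seg_entry_pos X hX a b v hv s

lemma cast_pred (hn : 1 ≤ n) : ((n - 1 : ℕ) : ZMod n) = -1 := by
  rw [Nat.cast_sub hn, ZMod.natCast_self, zero_sub, Nat.cast_one]

lemma cast_sub_self (a : ℕ) (ha : a ≤ n) : ((n - a : ℕ) : ZMod n) = -(a : ZMod n) := by
  rw [Nat.cast_sub ha, ZMod.natCast_self, zero_sub]

lemma cast_mul_pred (hn : 1 ≤ n) (q : ℕ) : (((n - 1) * q : ℕ) : ZMod n) = -(q : ZMod n) := by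
  rw [Nat.cast_mul, cast_pred hn]
  ring

lemma sigmaBarF_single_zero (hn : 1 ≤ n) (t : ZMod n) (y : Vec n) :
    sigmaBarF n t 0 [y] = 1 := by
  rw [sigmaBarF_cons_eq, Finset.sum_range_one]
  norm_num
  exact tauF_zero hn t _

end Aux5


section Aux6
open Finset
variable {n : ℕ}

lemma key_identity (hn : 2 ≤ n) (X : ℕ → Vec n) (j p d : ℕ) (hpd : p + 1 + d = j) (s : ZMod n) :
    (∑ e ∈ Finset.range n,
      (∏ t ∈ Finset.range e, X j (s + 1 + (t:ℕ) + (d:ℕ))) *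
        sigmaBarF n (s + (e:ℕ)) ((n-1)*(j-(p+1))) (seg X (p+1) j) *
        (∏ t ∈ Finset.range (n - 1 - e), X p (s + 1 + (e:ℕ) + (t:ℕ))))
      = sigmaBarF n (s - 1) ((n-1)*(j-p)) (seg X p j) := by
  have hn1 : 1 ≤ n := by omega
  have hpj : p < j := by omega
  have hp1j : p + 1 ≤ j := by omega
  set N' := (n-1)*(j-(p+1)) with hN'
  have hNN : (n-1)*(j-p) = N' + (n-1) := by
    rw [hN']
    have h : j - p = (j - (p+1)) + 1 := by omega
    rw [h, Nat.mul_add, Nat.mul_one]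
  have hcons : seg X p j = X p :: seg X (p+1) j := seg_cons_s7 X p j (le_of_lt hpj)
  have hcons2 : seg X (p+1) j = X (p+1) :: seg X (p+2) j := seg_cons_s7 X (p+1) j hp1j
  have hgl : (X (p+1) :: seg X (p+2) j).getLast (List.cons_ne_nil _ _) = X j := by
    rw [List.getLast_congr _ (seg_ne_nil_s7 X (p+1) j hp1j) hcons2.symm]
    exact seg_getLast_s7 X (p+1) j hp1j _
  have hlen : (n-1) * (seg X (p+2) j).length ≤ N' := by
    rw [seg_length, show j + 1 - (p+2) = j - (p+1) from by omega, hN']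
  rw [hNN, hcons, hcons2, sigmaBarF_peel hn1 (s-1) _ (by omega) _ _ _]
  symm
  rw [← Finset.sum_range_reflect]
  apply Finset.sum_congr rfl
  intro e he
  rw [Finset.mem_range] at he
  -- degree
  rw [show N' + (n-1) - (n-1-e) = N' + e from by omega]
  -- superscript
  have hsup : (s - 1) - ((n-1-e : ℕ) : ZMod n) = s + (e:ℕ) := by
    rw [show (n-1-e : ℕ) = n - (1+e) from by omega, cast_sub_self _ (by omega)]
    push_cast
    ring
  rw [hsup]
  -- the X p products
  have hB : (∏ β ∈ Finset.range (n-1-e), X p ((s - 1) - (β:ℕ)))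
      = ∏ t ∈ Finset.range (n-1-e), X p (s + 1 + (e:ℕ) + (t:ℕ)) := by
    rw [← Finset.prod_range_reflect (fun t => X p (s + 1 + (e:ℕ) + (t:ℕ))) (n-1-e)]
    apply Finset.prod_congr rfl
    intro β hβ
    rw [Finset.mem_range] at hβ
    apply congrArg (X p)
    rw [show (n-1-e-1-β : ℕ) = n - (2+e+β) from by omega, cast_sub_self _ (by omega)]
    push_cast
    ring
  -- the sigmaBar expansion
  have hsig : sigmaBarF n (s + (e:ℕ)) (N' + e) (X (p+1) :: seg X (p+2) j)
      = sigmaBarF n (s + (e:ℕ)) N' (X (p+1) :: seg X (p+2) j) *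
          ∏ t ∈ Finset.range e, X j (s + 1 + (t:ℕ) + (d:ℕ)) := by
    rw [sigmaBarF_add_deg _ N' _ _ hlen e]
    congr 1
    rw [hgl]
    rw [← Finset.prod_range_reflect (fun u => X j (s + (e:ℕ) - ((N' + u : ℕ) : ZMod n))) e]
    apply Finset.prod_congr rfl
    intro t ht
    rw [Finset.mem_range] at ht
    apply congrArg (X j)
    have hc1 : ((N' + (e - 1 - t) : ℕ) : ZMod n) = -(d : ZMod n) + ((e:ZMod n) - 1 - (t:ZMod n)) := by
      push_cast
      rw [hN', cast_mul_pred hn1, show j - (p+1) = d from by omega,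
        show (e - 1 - t : ℕ) = e - (1 + t) from by omega, Nat.cast_sub (by omega)]
      push_cast
      ring
    rw [hc1]
    ring
  rw [hsig, hB]
  ring

lemma Kstep (hn : 2 ≤ n) (X : ℕ → Vec n) (hX : ∀ p r, 0 < X p r) (j p d : ℕ)
    (hpd : p + 1 + d = j)
    (hZ : ∀ s : ZMod n, passL n (seg X (p+1) (j-1)) (X j) s
        = X j (s + (d:ℕ)) * sigmaBarF n s ((n-1)*(j-(p+1))) (seg X (p+1) j)
            / sigmaBarF n (s - 1) ((n-1)*(j-(p+1))) (seg X (p+1) j))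
    (s : ZMod n) :
    kappaF n s (X p) (passL n (seg X (p+1) (j-1)) (X j))
      = sigmaBarF n (s - 1) ((n-1)*(j-p)) (seg X p j)
        / sigmaBarF n s ((n-1)*(j-(p+1))) (seg X (p+1) j) := by
  have hn1 : 1 ≤ n := by omega
  have hp1j : p + 1 ≤ j := by omega
  have hFpos : ∀ t : ZMod n, 0 < sigmaBarF n t ((n-1)*(j-(p+1))) (seg X (p+1) j) :=
    fun t => sigmaBarF_seg_pos hn1 X hX t _ _ _ hp1j
  have hFne : ∀ t : ZMod n, sigmaBarF n t ((n-1)*(j-(p+1))) (seg X (p+1) j) ≠ 0 :=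
    fun t => ne_of_gt (hFpos t)
  have stepA : ∀ e : ℕ,
      (∏ t ∈ Finset.range e, passL n (seg X (p+1) (j-1)) (X j) (s + 1 + (t:ℕ)))
      = (∏ t ∈ Finset.range e, X j (s + 1 + (t:ℕ) + (d:ℕ))) *
          (sigmaBarF n (s + (e:ℕ)) ((n-1)*(j-(p+1))) (seg X (p+1) j)
            / sigmaBarF n s ((n-1)*(j-(p+1))) (seg X (p+1) j)) := by
    intro e
    have h1 : ∀ t ∈ Finset.range e,
        passL n (seg X (p+1) (j-1)) (X j) (s + 1 + (t:ℕ))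
        = X j (s + 1 + (t:ℕ) + (d:ℕ)) *
            (sigmaBarF n (s + ((t+1 : ℕ) : ZMod n)) ((n-1)*(j-(p+1))) (seg X (p+1) j)
              / sigmaBarF n (s + (t:ℕ)) ((n-1)*(j-(p+1))) (seg X (p+1) j)) := by
      intro t _
      rw [hZ (s + 1 + (t:ℕ))]
      rw [show s + ((t+1 : ℕ) : ZMod n) = s + 1 + (t:ℕ) from by push_cast; ring,
        show s + (t:ℕ) = s + 1 + (t:ℕ) - 1 from by ring]
      rw [mul_div_assoc]
    rw [Finset.prod_congr rfl h1, Finset.prod_mul_distrib]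
    congr 1
    have h2 := prod_ratio (fun t => sigmaBarF n (s + (t:ℕ)) ((n-1)*(j-(p+1))) (seg X (p+1) j))
      (fun t => hFne _) e
    simpa using h2
  rw [kappaF]
  have hterm : ∀ e ∈ Finset.range n,
      (∏ t ∈ Finset.range e, passL n (seg X (p+1) (j-1)) (X j) (s + 1 + (t:ℕ))) *
        (∏ t ∈ Finset.range (n - 1 - e), X p (s + 1 + (e:ℕ) + (t:ℕ)))
      = ((∏ t ∈ Finset.range e, X j (s + 1 + (t:ℕ) + (d:ℕ))) *
          sigmaBarF n (s + (e:ℕ)) ((n-1)*(j-(p+1))) (seg X (p+1) j) *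
          (∏ t ∈ Finset.range (n - 1 - e), X p (s + 1 + (e:ℕ) + (t:ℕ))))
        / sigmaBarF n s ((n-1)*(j-(p+1))) (seg X (p+1) j) := by
    intro e _
    rw [stepA e]
    ring
  rw [Finset.sum_congr rfl hterm, ← Finset.sum_div, key_identity hn X j p d hpd s]

lemma Zform (hn : 2 ≤ n) (X : ℕ → Vec n) (hX : ∀ p r, 0 < X p r) (j : ℕ) (hj : 1 ≤ j) :
    ∀ d p, p + d = j → ∀ s : ZMod n,
      passL n (seg X p (j-1)) (X j) s
        = X j (s + (d:ℕ)) * sigmaBarF n s ((n-1)*(j-p)) (seg X p j)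
            / sigmaBarF n (s - 1) ((n-1)*(j-p)) (seg X p j) := by
  have hn1 : 1 ≤ n := by omega
  intro d
  induction d with
  | zero =>
    intro p hp s
    have hpj : p = j := by omega
    subst hpj
    rw [seg_nil X p (p-1) (by omega)]
    show X p s = _
    rw [Nat.sub_self, Nat.mul_zero, seg_self, sigmaBarF_single_zero hn1,
      sigmaBarF_single_zero hn1]
    push_cast
    rw [add_zero, mul_one, div_one]
  | succ d ih =>
    intro p hp s
    have hpd : p + 1 + d = j := by omega
    have hZ := ih (p+1) (by omega)
    have hFpos : ∀ t : ZMod n, 0 < sigmaBarF n t ((n-1)*(j-(p+1))) (seg X (p+1) j) :=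
      fun t => sigmaBarF_seg_pos hn1 X hX t _ _ _ (by omega)
    have hGpos : ∀ t : ZMod n, 0 < sigmaBarF n t ((n-1)*(j-p)) (seg X p j) :=
      fun t => sigmaBarF_seg_pos hn1 X hX t _ _ _ (by omega)
    rw [seg_cons_s7 X p (j-1) (by omega)]
    show etaB n (X p) (passL n (seg X (p+1) (j-1)) (X j)) s = _
    show passL n (seg X (p+1) (j-1)) (X j) (s + 1) *
        kappaF n (s + 1) (X p) (passL n (seg X (p+1) (j-1)) (X j)) /
        kappaF n s (X p) (passL n (seg X (p+1) (j-1)) (X j)) = _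
    rw [Kstep hn X hX j p d hpd hZ (s+1), Kstep hn X hX j p d hpd hZ s, hZ (s+1)]
    rw [show s + 1 - 1 = s from by ring]
    rw [show s + ((d + 1 : ℕ) : ZMod n) = s + 1 + (d:ℕ) from by push_cast; ring]
    have h1 := ne_of_gt (hFpos (s+1))
    have h2 := ne_of_gt (hFpos s)
    have h3 := ne_of_gt (hGpos (s-1))
    have h4 := ne_of_gt (hGpos s)
    field_simp

end Aux6


/-- for `1 ≤ i < j ≤ m`,
`κ_r(x_i, s_{i+1}⋯s_{j-1}(x_{i+1})) = σ̄^{(r-1)}_{(n-1)(j-i)}(x_i,…,x_j) /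
σ̄^{(r)}_{(n-1)(j-i-1)}(x_{i+1},…,x_j)`. -/
theorem one_shift_dual_kappa (n : ℕ) (hn : 2 ≤ n) (m : ℕ) (X : ℕ → Vec n)
    (hX : ∀ p r, 0 < X p r) (i j : ℕ) (hi : 1 ≤ i) (hij : i < j) (hjm : j ≤ m)
    (r : ZMod n) :
    kappaF n r (X i) (applyWord n (List.range' (i + 1) (j - 1 - i)) X (i + 1)) =
      sigmaBarF n (r - 1) ((n - 1) * (j - i)) (seg X i j) /
        sigmaBarF n r ((n - 1) * (j - i - 1)) (seg X (i + 1) j) := by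
  have hj1 : 1 ≤ j := by omega
  have happ : applyWord n (List.range' (i + 1) (j - 1 - i)) X (i + 1)
      = passL n (seg X (i+1) (j-1)) (X j) := by
    rw [applyWord_range' X (j-1-i) (i+1) (by omega)]
    rw [show i+1+(j-1-i)-1 = j-1 from by omega, show i+1+(j-1-i) = j from by omega]
  rw [happ]
  have hZ := Zform hn X hX j hj1 (j-(i+1)) (i+1) (by omega)
  have hK := Kstep hn X hX j i (j-(i+1)) (by omega) hZ r
  rw [hK, show j - (i+1) = j - i - 1 from by omega]
end
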